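/- arXiv:1608.08416 — 2 statements merged into one kernel-verified Lean document; each statement's English description precedes it below -/
import Mathlib

section
/- There exists a constant K > 0, independent of the polynomial degree W, such that for every W ∈ ℕ and every real polynomial u(ξ,η) of degree at most W in each of ξ and η separately, ∫_S |∂_ξ∂_η u|² dξ dη ≤ (K/2) ∫_S (|∂²_ξ u|² + |∂²_η u|² + |u|²) dξ dη, where S = (-1,1)². -/
open MeasureTheory

/-- The (i,j)-th partial derivative of `U : ℝ × ℝ → ℝ`:
`i` derivatives in the first (ξ) variable and `j` derivatives in the second (η) variable. -/
noncomputable def pder (i j : ℕ) (U : ℝ × ℝ → ℝ) (p : ℝ × ℝ) : ℝ :=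
  iteratedDeriv i (fun ξ => iteratedDeriv j (fun η => U (ξ, η)) p.2) p.1

/-- The open square `S = (-1,1) × (-1,1)`. -/
def Sq : Set (ℝ × ℝ) := Set.Ioo (-1 : ℝ) 1 ×ˢ Set.Ioo (-1 : ℝ) 1

/-- The real polynomial `u(ξ,η) = Σ_{i=0}^{W} Σ_{j=0}^{W} a_{i,j} ξ^i η^j`
of degree at most `W` in each variable separately. -/
def polyFun (W : ℕ) (a : ℕ → ℕ → ℝ) : ℝ × ℝ → ℝ := fun p =>
  ∑ i ∈ Finset.range (W + 1), ∑ j ∈ Finset.range (W + 1), a i j * p.1 ^ i * p.2 ^ j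

open Polynomial intervalIntegral

noncomputable section


/-- integral of a product of two polynomial functions over an interval -/
noncomputable def ii (a b : ℝ) (P Q : ℝ[X]) : ℝ := ∫ x in a..b, P.eval x * Q.eval x

lemma intg (P Q : ℝ[X]) (a b : ℝ) :
    IntervalIntegrable (fun x => P.eval x * Q.eval x) volume a b :=
  ((P.continuous_aeval).mul (Q.continuous_aeval)).intervalIntegrable a b

lemma ii_symm (a b : ℝ) (P Q : ℝ[X]) : ii a b P Q = ii a b Q P := by
  unfold ii; congr 1; ext x; ring

lemma ii_nonneg {a b : ℝ} (h : a ≤ b) (P : ℝ[X]) : 0 ≤ ii a b P P := by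
  unfold ii
  apply intervalIntegral.integral_nonneg h
  intro x _; exact mul_self_nonneg _

lemma ii_amgm {a b : ℝ} (h : a ≤ b) (P Q : ℝ[X]) :
    ii a b P Q ≤ ii a b P P / 2 + ii a b Q Q / 2 := by
  unfold ii
  rw [← add_div, ← intervalIntegral.integral_add (intg P P a b) (intg Q Q a b),
    show (fun x => P.eval x * P.eval x + Q.eval x * Q.eval x) =
      fun x => (P.eval x * P.eval x + Q.eval x * Q.eval x) from rfl]
  rw [← intervalIntegral.integral_div]
  apply intervalIntegral.integral_mono_on h (intg P Q a b)
    (((intg P P a b).add (intg Q Q a b)).div_const 2)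
  intro x _
  nlinarith [sq_nonneg (P.eval x - Q.eval x)]

/-- FTC for polynomials -/
lemma ftcP (P : ℝ[X]) (a b : ℝ) :
    ∫ x in a..b, (derivative P).eval x = P.eval b - P.eval a :=
  intervalIntegral.integral_eq_sub_of_hasDerivAt (fun x _ => P.hasDerivAt x)
    ((derivative P).continuous_aeval.intervalIntegrable a b)

/-- integration by parts for polynomials -/
lemma partsP (P Q : ℝ[X]) (a b : ℝ) :
    ii a b (derivative P) (derivative Q) + ii a b (derivative (derivative P)) Q
      = (derivative P).eval b * Q.eval b - (derivative P).eval a * Q.eval a := by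
  have h1 : ii a b (derivative P) (derivative Q) + ii a b (derivative (derivative P)) Q
      = ∫ x in a..b, (derivative ((derivative P) * Q)).eval x := by
    unfold ii
    rw [← intervalIntegral.integral_add (intg _ _ a b) (intg _ _ a b)]
    congr 1; ext x
    simp [Polynomial.derivative_mul]; ring
  rw [h1, ftcP]
  simp

lemma ii_left_sub (P : ℝ[X]) {a b c : ℝ} (hab : a ≤ b) (hbc : b ≤ c) :
    ii b c P P ≤ ii a c P P := by
  have := intervalIntegral.integral_add_adjacent_intervals (a := a) (b := b) (c := c)
    (f := fun x => P.eval x * P.eval x) (μ := volume) (intg P P a b) (intg P P b c)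
  have h0 : 0 ≤ ii a b P P := ii_nonneg hab P
  unfold ii at *
  linarith

lemma ii_right_sub (P : ℝ[X]) {a b c : ℝ} (hab : a ≤ b) (hbc : b ≤ c) :
    ii a b P P ≤ ii a c P P := by
  have := intervalIntegral.integral_add_adjacent_intervals (a := a) (b := b) (c := c)
    (f := fun x => P.eval x * P.eval x) (μ := volume) (intg P P a b) (intg P P b c)
  have h0 : 0 ≤ ii b c P P := ii_nonneg hbc P
  unfold ii at *
  linarith

/-- substitution x ↦ 2 - x -/
lemma subst_right_refl (P : ℝ[X]) :
    (∫ x in (1:ℝ)..2, P.eval (2 - x) * P.eval (2 - x)) = ii 0 1 P P := by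
  rw [intervalIntegral.integral_comp_sub_left (fun y => P.eval y * P.eval y) 2]
  norm_num [ii]

/-- substitution x ↦ 3 - 2x -/
lemma subst_right_scale (P : ℝ[X]) :
    (∫ x in (1:ℝ)..2, P.eval (3 - 2*x) * P.eval (3 - 2*x)) = (1/2) * ii (-1) 1 P P := by
  have h : (fun x : ℝ => P.eval (3 - 2*x) * P.eval (3 - 2*x)) =
      fun x : ℝ => (fun y => P.eval y * P.eval y) ((-2) * x + 3) := by
    ext x; ring_nf
  rw [h, intervalIntegral.integral_comp_mul_add (fun y => P.eval y * P.eval y)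
    (by norm_num : (-2:ℝ) ≠ 0) 3]
  norm_num [ii]
  rw [intervalIntegral.integral_symm]
  ring

/-- substitution x ↦ -2 - x -/
lemma subst_left_refl (P : ℝ[X]) :
    (∫ x in (-2:ℝ)..(-1), P.eval (-2 - x) * P.eval (-2 - x)) = ii (-1) 0 P P := by
  rw [intervalIntegral.integral_comp_sub_left (fun y => P.eval y * P.eval y) (-2)]
  norm_num [ii]

/-- substitution x ↦ -3 - 2x -/
lemma subst_left_scale (P : ℝ[X]) :
    (∫ x in (-2:ℝ)..(-1), P.eval (-3 - 2*x) * P.eval (-3 - 2*x)) = (1/2) * ii (-1) 1 P P := by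
  have h : (fun x : ℝ => P.eval (-3 - 2*x) * P.eval (-3 - 2*x)) =
      fun x : ℝ => (fun y => P.eval y * P.eval y) ((-2) * x + (-3)) := by
    ext x; ring_nf
  rw [h, intervalIntegral.integral_comp_mul_add (fun y => P.eval y * P.eval y)
    (by norm_num : (-2:ℝ) ≠ 0) (-3)]
  norm_num [ii]
  rw [intervalIntegral.integral_symm]
  ring



noncomputable def chiR : ℝ[X] := (2 - X)^2 * (2*X - 1)
noncomputable def chiL : ℝ[X] := (2 + X)^2 * (-(2*X) - 1)
noncomputable def gR (p : ℝ[X]) : ℝ[X] := 3 * p.comp (2 - X) - 2 * p.comp (3 - 2*X)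
noncomputable def gL (p : ℝ[X]) : ℝ[X] := 3 * p.comp (-2 - X) - 2 * p.comp (-3 - 2*X)
noncomputable def FR (p : ℝ[X]) : ℝ[X] := gR p * chiR
noncomputable def FL (p : ℝ[X]) : ℝ[X] := gL p * chiL

lemma dchiR : derivative chiR = 6*X^2 - 18*X + 12 := by
  unfold chiR
  simp only [derivative_mul, derivative_pow, derivative_sub, derivative_add, derivative_X,
    derivative_ofNat, derivative_one, Polynomial.derivative_C_mul, map_ofNat,
    Polynomial.C_eq_natCast, Nat.cast_ofNat]
  ring
lemma dchiL : derivative chiL = -(6*X^2) - 18*X - 12 := by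
  unfold chiL
  simp only [derivative_mul, derivative_pow, derivative_sub, derivative_add, derivative_X,
    derivative_neg, derivative_ofNat, derivative_one, Polynomial.derivative_C_mul, map_ofNat,
    Polynomial.C_eq_natCast, Nat.cast_ofNat]
  ring
lemma ddchiR : derivative (derivative chiR) = 12*X - 18 := by
  rw [dchiR]
  simp only [derivative_add, derivative_sub, Polynomial.derivative_C_mul, derivative_pow,
    derivative_X, derivative_ofNat, map_ofNat, Polynomial.C_eq_natCast, Nat.cast_ofNat,
    derivative_mul]
  ring
lemma ddchiL : derivative (derivative chiL) = -(12*X) - 18 := by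
  rw [dchiL]
  simp only [derivative_add, derivative_sub, derivative_neg, Polynomial.derivative_C_mul,
    derivative_pow, derivative_X, derivative_ofNat, map_ofNat, Polynomial.C_eq_natCast,
    Nat.cast_ofNat, derivative_mul]
  ring

lemma dgR (p : ℝ[X]) : derivative (gR p) =
    -(3 * (derivative p).comp (2 - X)) + 4 * (derivative p).comp (3 - 2*X) := by
  unfold gR
  simp only [derivative_sub, Polynomial.derivative_C_mul, derivative_comp, derivative_ofNat,
    derivative_X, derivative_mul, derivative_one, map_ofNat, Polynomial.C_eq_natCast,
    Nat.cast_ofNat]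
  ring
lemma dgL (p : ℝ[X]) : derivative (gL p) =
    -(3 * (derivative p).comp (-2 - X)) + 4 * (derivative p).comp (-3 - 2*X) := by
  unfold gL
  simp only [derivative_sub, Polynomial.derivative_C_mul, derivative_comp, derivative_ofNat,
    derivative_X, derivative_mul, derivative_one, derivative_neg, map_ofNat,
    Polynomial.C_eq_natCast, Nat.cast_ofNat]
  ring
lemma ddgR (p : ℝ[X]) : derivative (derivative (gR p)) =
    3 * ((derivative (derivative p)).comp (2 - X)) -
      8 * ((derivative (derivative p)).comp (3 - 2*X)) := by
  rw [dgR]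
  simp only [derivative_add, derivative_neg, Polynomial.derivative_C_mul, derivative_comp,
    derivative_sub, derivative_ofNat, derivative_X, derivative_mul, map_ofNat,
    Polynomial.C_eq_natCast, Nat.cast_ofNat]
  ring
lemma ddgL (p : ℝ[X]) : derivative (derivative (gL p)) =
    3 * ((derivative (derivative p)).comp (-2 - X)) -
      8 * ((derivative (derivative p)).comp (-3 - 2*X)) := by
  rw [dgL]
  simp only [derivative_add, derivative_neg, Polynomial.derivative_C_mul, derivative_comp,
    derivative_sub, derivative_ofNat, derivative_X, derivative_mul, map_ofNat,
    Polynomial.C_eq_natCast, Nat.cast_ofNat]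
  ring

/- seam and endpoint evaluations -/
lemma FR_eval_one (p : ℝ[X]) : (FR p).eval 1 = p.eval 1 := by
  simp [FR, gR, chiR, eval_comp]; ring
lemma FR_eval_two (p : ℝ[X]) : (FR p).eval 2 = 0 := by
  simp [FR, gR, chiR, eval_comp]
lemma dFR_eval_one (p : ℝ[X]) : (derivative (FR p)).eval 1 = (derivative p).eval 1 := by
  unfold FR
  rw [derivative_mul, dgR, dchiR]
  simp [gR, chiR, eval_comp]; ring
lemma dFR_eval_two (p : ℝ[X]) : (derivative (FR p)).eval 2 = 0 := by
  unfold FR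
  rw [derivative_mul, dgR, dchiR]
  simp [gR, chiR, eval_comp]
  norm_num
lemma FL_eval_negone (p : ℝ[X]) : (FL p).eval (-1) = p.eval (-1) := by
  simp [FL, gL, chiL, eval_comp]; ring
lemma FL_eval_negtwo (p : ℝ[X]) : (FL p).eval (-2) = 0 := by
  simp [FL, gL, chiL, eval_comp]
lemma dFL_eval_negone (p : ℝ[X]) : (derivative (FL p)).eval (-1) = (derivative p).eval (-1) := by
  unfold FL
  rw [derivative_mul, dgL, dchiL]
  simp [gL, chiL, eval_comp]; ring
lemma dFL_eval_negtwo (p : ℝ[X]) : (derivative (FL p)).eval (-2) = 0 := by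
  unfold FL
  rw [derivative_mul, dgL, dchiL]
  simp [gL, chiL, eval_comp]
  norm_num

/- the three-piece quadratic forms -/
noncomputable def AAf (p q : ℝ[X]) : ℝ :=
  ii (-2) (-1) (derivative (FL p)) (derivative (FL q)) + ii (-1) 1 (derivative p) (derivative q)
    + ii 1 2 (derivative (FR p)) (derivative (FR q))
noncomputable def BBf (p q : ℝ[X]) : ℝ :=
  ii (-2) (-1) (derivative (derivative (FL p))) (FL q)
    + ii (-1) 1 (derivative (derivative p)) q
    + ii 1 2 (derivative (derivative (FR p))) (FR q)

lemma AAf_symm (p q : ℝ[X]) : AAf p q = AAf q p := by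
  unfold AAf; rw [ii_symm (-2) (-1), ii_symm (-1) 1, ii_symm 1 2]

/-- global integration by parts: no boundary terms -/
lemma AAf_eq_neg_BBf (p q : ℝ[X]) : AAf p q = - BBf p q := by
  have h1 := partsP (FL p) (FL q) (-2) (-1)
  have h2 := partsP p q (-1) 1
  have h3 := partsP (FR p) (FR q) 1 2
  unfold AAf BBf
  rw [dFL_eval_negone, dFL_eval_negtwo, FL_eval_negone] at h1
  rw [dFR_eval_one, dFR_eval_two, FR_eval_one] at h3
  linarith

end

section traces

/-- trace inequality at +1 with parameter γ -/
lemma trace_pos (p : ℝ[X]) (γ : ℝ) (hγ : 0 < γ) :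
    4*γ*(p.eval 1)^2 ≤ (2*γ + 2) * ii (-1) 1 p p
      + 8*γ^2 * ii (-1) 1 (derivative p) (derivative p) := by
  set Φ : ℝ[X] := Polynomial.C (2*γ) * ((1 + X) * p^2) with hΦ
  have hd : ∀ x : ℝ, (derivative Φ).eval x =
      2*γ*((p.eval x)^2 + (1+x)*(2*(p.eval x)*((derivative p).eval x))) := by
    intro x
    rw [hΦ]
    simp only [Polynomial.derivative_C_mul, derivative_mul, derivative_add, derivative_one,
      derivative_X, derivative_pow]
    simp [eval_comp]
    try ring
  have hftc := ftcP Φ (-1) 1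
  have hΦ1 : Φ.eval 1 = 4*γ*(p.eval 1)^2 := by rw [hΦ]; simp <;> ring
  have hΦm1 : Φ.eval (-1) = 0 := by rw [hΦ]; simp
  have key : 4*γ*(p.eval 1)^2 = ∫ x in (-1:ℝ)..1, (derivative Φ).eval x := by
    rw [hftc, hΦ1, hΦm1]; ring
  rw [key]
  have hmono : (∫ x in (-1:ℝ)..1, (derivative Φ).eval x) ≤
      ∫ x in (-1:ℝ)..1, ((2*γ+2) * (p.eval x * p.eval x)
        + (8*γ^2) * ((derivative p).eval x * (derivative p).eval x)) := by
    apply intervalIntegral.integral_mono_on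
      (f := fun x => (derivative Φ).eval x)
      (g := fun x => ((2*γ+2) * (p.eval x * p.eval x)
        + (8*γ^2) * ((derivative p).eval x * (derivative p).eval x))) (by norm_num)
      ((derivative Φ).continuous_aeval.intervalIntegrable _ _)
      (((continuous_const.mul (p.continuous_aeval.mul p.continuous_aeval)).add
        (continuous_const.mul ((derivative p).continuous_aeval.mul
          (derivative p).continuous_aeval))).intervalIntegrable _ _)
    intro x hx
    rw [hd x]
    obtain ⟨h1, h2⟩ := hx
    have e1 : 0 ≤ 1 + x := by linarith
    have e2 : 1 + x ≤ 2 := by linarith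
    have hA : 0 ≤ (1+x) * ((p.eval x - 2*γ*(derivative p).eval x))^2 :=
      mul_nonneg e1 (sq_nonneg _)
    have hB : 0 ≤ (2 - (1+x)) * ((p.eval x)^2 + 4*γ^2*((derivative p).eval x)^2) := by
      apply mul_nonneg (by linarith)
      positivity
    nlinarith [hA, hB]
  calc (∫ x in (-1:ℝ)..1, (derivative Φ).eval x) ≤ _ := hmono
    _ = (2*γ + 2) * ii (-1) 1 p p + 8*γ^2 * ii (-1) 1 (derivative p) (derivative p) := by
        rw [intervalIntegral.integral_add ((intg p p _ _).const_mul _)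
          ((intg (derivative p) (derivative p) _ _).const_mul _),
          intervalIntegral.integral_const_mul, intervalIntegral.integral_const_mul]
        rfl

/-- trace inequality at -1 with parameter γ -/
lemma trace_neg (p : ℝ[X]) (γ : ℝ) (hγ : 0 < γ) :
    4*γ*(p.eval (-1))^2 ≤ (2*γ + 2) * ii (-1) 1 p p
      + 8*γ^2 * ii (-1) 1 (derivative p) (derivative p) := by
  set Φ : ℝ[X] := Polynomial.C (2*γ) * ((1 - X) * p^2) with hΦ
  have hd : ∀ x : ℝ, (derivative Φ).eval x =
      2*γ*(-(p.eval x)^2 + (1-x)*(2*(p.eval x)*((derivative p).eval x))) := by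
    intro x
    rw [hΦ]
    simp only [Polynomial.derivative_C_mul, derivative_mul, derivative_sub, derivative_one,
      derivative_X, derivative_pow]
    simp [eval_comp]
    try ring
  have hftc := ftcP Φ (-1) 1
  have hΦ1 : Φ.eval 1 = 0 := by rw [hΦ]; simp
  have hΦm1 : Φ.eval (-1) = 4*γ*(p.eval (-1))^2 := by rw [hΦ]; simp <;> ring
  have key : 4*γ*(p.eval (-1))^2 = ∫ x in (-1:ℝ)..1, (-(derivative Φ).eval x) := by
    rw [intervalIntegral.integral_neg, hftc, hΦ1, hΦm1]; ring
  rw [key]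
  have hmono : (∫ x in (-1:ℝ)..1, (-(derivative Φ).eval x)) ≤
      ∫ x in (-1:ℝ)..1, ((2*γ+2) * (p.eval x * p.eval x)
        + (8*γ^2) * ((derivative p).eval x * (derivative p).eval x)) := by
    apply intervalIntegral.integral_mono_on
      (f := fun x => -(derivative Φ).eval x)
      (g := fun x => ((2*γ+2) * (p.eval x * p.eval x)
        + (8*γ^2) * ((derivative p).eval x * (derivative p).eval x))) (by norm_num)
      ((derivative Φ).continuous_aeval.neg.intervalIntegrable _ _)
      (((continuous_const.mul (p.continuous_aeval.mul p.continuous_aeval)).add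
        (continuous_const.mul ((derivative p).continuous_aeval.mul
          (derivative p).continuous_aeval))).intervalIntegrable _ _)
    intro x hx
    rw [hd x]
    obtain ⟨h1, h2⟩ := hx
    have e1 : 0 ≤ 1 - x := by linarith
    have e2 : 1 - x ≤ 2 := by linarith
    have hA : 0 ≤ (1-x) * ((p.eval x + 2*γ*(derivative p).eval x))^2 :=
      mul_nonneg e1 (sq_nonneg _)
    have hB : 0 ≤ (2 - (1-x)) * ((p.eval x)^2 + 4*γ^2*((derivative p).eval x)^2) := by
      apply mul_nonneg (by linarith)
      positivity
    nlinarith [hA, hB]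
  calc (∫ x in (-1:ℝ)..1, (-(derivative Φ).eval x)) ≤ _ := hmono
    _ = (2*γ + 2) * ii (-1) 1 p p + 8*γ^2 * ii (-1) 1 (derivative p) (derivative p) := by
        rw [intervalIntegral.integral_add ((intg p p _ _).const_mul _)
          ((intg (derivative p) (derivative p) _ _).const_mul _),
          intervalIntegral.integral_const_mul, intervalIntegral.integral_const_mul]
        rfl

/-- Landau-type inequality on [-1,1] -/
lemma landau (p : ℝ[X]) :
    ii (-1) 1 (derivative p) (derivative p) ≤ 133 * ii (-1) 1 p p
      + 2 * ii (-1) 1 (derivative (derivative p)) (derivative (derivative p)) := by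
  set a2 := ii (-1) 1 p p with ha2
  set b2 := ii (-1) 1 (derivative p) (derivative p) with hb2
  set c2 := ii (-1) 1 (derivative (derivative p)) (derivative (derivative p)) with hc2
  have hparts := partsP p p (-1) 1
  -- -∫ p'' p ≤ (a2 + c2)/2
  have hcross : - ii (-1) 1 (derivative (derivative p)) p ≤ (a2 + c2)/2 := by
    have : - ii (-1) 1 (derivative (derivative p)) p
        = ∫ x in (-1:ℝ)..1, -((derivative (derivative p)).eval x * p.eval x) := by
      rw [ii, ← intervalIntegral.integral_neg]
    rw [this]
    have hm : (∫ x in (-1:ℝ)..1, -((derivative (derivative p)).eval x * p.eval x)) ≤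
        ∫ x in (-1:ℝ)..1, ((p.eval x * p.eval x)/2
          + ((derivative (derivative p)).eval x * (derivative (derivative p)).eval x)/2) := by
      apply intervalIntegral.integral_mono_on
        (f := fun x => -((derivative (derivative p)).eval x * p.eval x))
        (g := fun x => ((p.eval x * p.eval x)/2
          + ((derivative (derivative p)).eval x * (derivative (derivative p)).eval x)/2))
        (by norm_num)
        (((intg (derivative (derivative p)) p (-1) 1)).neg)
        (((intg p p (-1) 1).div_const 2).add
          ((intg (derivative (derivative p)) (derivative (derivative p)) (-1) 1).div_const 2))
      intro x _
      nlinarith [sq_nonneg (p.eval x + (derivative (derivative p)).eval x)]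
    calc (∫ x in (-1:ℝ)..1, -((derivative (derivative p)).eval x * p.eval x)) ≤ _ := hm
      _ = (a2 + c2)/2 := by
          rw [intervalIntegral.integral_add ((intg p p _ _).div_const 2)
            ((intg _ _ _ _).div_const 2), intervalIntegral.integral_div,
            intervalIntegral.integral_div]
          rw [ha2, hc2]; unfold ii; ring
  -- traces with γ = 1/32 for p, γ = 1 for p'
  have t1 := trace_pos p (1/32) (by norm_num)
  have t2 := trace_neg p (1/32) (by norm_num)
  have t3 := trace_pos (derivative p) 1 (by norm_num)
  have t4 := trace_neg (derivative p) 1 (by norm_num)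
  -- boundary products
  have bp1 : (derivative p).eval 1 * p.eval 1 ≤
      2*(p.eval 1)^2 + (1/8)*((derivative p).eval 1)^2 := by
    nlinarith [sq_nonneg (4*(p.eval 1) - (derivative p).eval 1)]
  have bp2 : -((derivative p).eval (-1) * p.eval (-1)) ≤
      2*(p.eval (-1))^2 + (1/8)*((derivative p).eval (-1))^2 := by
    nlinarith [sq_nonneg (4*(p.eval (-1)) + (derivative p).eval (-1))]
  linarith

end traces

section norms

lemma Continuous.const_mul' {f : ℝ → ℝ} (h : Continuous f) (c : ℝ) :
    Continuous fun x => c * f x := continuous_const.mul h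

lemma intg_aff1 (P : ℝ[X]) (k c a b : ℝ) :
    IntervalIntegrable (fun x => k * (P.eval (c - x) * P.eval (c - x))) volume a b := by
  apply Continuous.intervalIntegrable
  exact continuous_const.mul ((P.continuous_aeval.comp (by continuity)).mul
    (P.continuous_aeval.comp (by continuity)))

lemma intg_aff2 (P : ℝ[X]) (k c a b : ℝ) :
    IntervalIntegrable (fun x => k * (P.eval (c - 2*x) * P.eval (c - 2*x))) volume a b := by
  apply Continuous.intervalIntegrable
  exact continuous_const.mul ((P.continuous_aeval.comp (by continuity)).mul
    (P.continuous_aeval.comp (by continuity)))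


lemma chiR_bounds {x : ℝ} (hx : x ∈ Set.Icc (1:ℝ) 2) :
    0 ≤ chiR.eval x ∧ chiR.eval x ≤ 1 := by
  obtain ⟨h1, h2⟩ := hx
  have he : chiR.eval x = (2-x)^2*(2*x-1) := by simp [chiR]
  constructor
  · rw [he]; nlinarith [sq_nonneg (2-x)]
  · rw [he]; nlinarith [sq_nonneg (2-x), sq_nonneg (x-1), mul_nonneg (sq_nonneg (x-1)) (by linarith : (0:ℝ) ≤ 2*x-1)]

lemma chiL_bounds {x : ℝ} (hx : x ∈ Set.Icc (-2:ℝ) (-1)) :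
    0 ≤ chiL.eval x ∧ chiL.eval x ≤ 1 := by
  obtain ⟨h1, h2⟩ := hx
  have he : chiL.eval x = (2+x)^2*(-(2*x)-1) := by simp [chiL]
  constructor
  · rw [he]; nlinarith [sq_nonneg (2+x)]
  · rw [he]; nlinarith [sq_nonneg (2+x), sq_nonneg (x+1), mul_nonneg (sq_nonneg (x+1)) (by linarith : (0:ℝ) ≤ -(2*x)-1)]

lemma dchiR_sq {x : ℝ} (hx : x ∈ Set.Icc (1:ℝ) 2) :
    ((derivative chiR).eval x)^2 ≤ 9/4 := by
  obtain ⟨h1, h2⟩ := hx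
  rw [dchiR]
  have he : (6*X^2 - 18*X + 12 : ℝ[X]).eval x = 6*((x-1)*(x-2)) := by simp; ring
  rw [he]
  nlinarith [sq_nonneg ((x-1)*(x-2)), sq_nonneg ((x-1)-(2-x)), mul_nonneg (by linarith : (0:ℝ) ≤ x-1) (by linarith : (0:ℝ) ≤ 2-x)]

lemma dchiL_sq {x : ℝ} (hx : x ∈ Set.Icc (-2:ℝ) (-1)) :
    ((derivative chiL).eval x)^2 ≤ 9/4 := by
  obtain ⟨h1, h2⟩ := hx
  rw [dchiL]
  have he : (-(6*X^2) - 18*X - 12 : ℝ[X]).eval x = -(6*((x+1)*(x+2))) := by simp; ring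
  rw [he]
  nlinarith [sq_nonneg ((x+1)*(x+2)), sq_nonneg ((x+2)-(-1-x)), mul_nonneg (by linarith : (0:ℝ) ≤ -1-x) (by linarith : (0:ℝ) ≤ x+2)]

lemma ddchiR_sq {x : ℝ} (hx : x ∈ Set.Icc (1:ℝ) 2) :
    ((derivative (derivative chiR)).eval x)^2 ≤ 36 := by
  obtain ⟨h1, h2⟩ := hx
  rw [ddchiR]
  have he : (12*X - 18 : ℝ[X]).eval x = 12*x - 18 := by simp
  rw [he]; nlinarith

lemma ddchiL_sq {x : ℝ} (hx : x ∈ Set.Icc (-2:ℝ) (-1)) :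
    ((derivative (derivative chiL)).eval x)^2 ≤ 36 := by
  obtain ⟨h1, h2⟩ := hx
  rw [ddchiL]
  have he : (-(12*X) - 18 : ℝ[X]).eval x = -(12*x) - 18 := by simp
  rw [he]; nlinarith

lemma contc (c : ℝ) : Continuous fun x : ℝ => c - x := by continuity
lemma contc2 : Continuous fun x : ℝ => 3 - 2*x := by continuity
lemma contc3 : Continuous fun x : ℝ => -3 - 2*x := by continuity

lemma norm0_right (p : ℝ[X]) : ii 1 2 (FR p) (FR p) ≤ 22 * ii (-1) 1 p p := by
  have hmono : ii 1 2 (FR p) (FR p) ≤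
      (∫ x in (1:ℝ)..2, (18*(p.eval (2-x) * p.eval (2-x)))) +
      ∫ x in (1:ℝ)..2, (8*(p.eval (3-2*x) * p.eval (3-2*x))) := by
    rw [← intervalIntegral.integral_add (intg_aff1 p 18 2 1 2) (intg_aff2 p 8 3 1 2)]
    unfold ii
    apply intervalIntegral.integral_mono_on (by norm_num) (intg _ _ _ _)
      ((intg_aff1 p 18 2 1 2).add (intg_aff2 p 8 3 1 2))
    intro x hx
    obtain ⟨hc0, hc1⟩ := chiR_bounds hx
    have he : (FR p).eval x = (3*p.eval (2-x) - 2*p.eval (3-2*x)) * chiR.eval x := by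
      simp [FR, gR, eval_comp]
    rw [he]
    set A := p.eval (2-x); set B := p.eval (3-2*x); set c := chiR.eval x
    have h1 : ((3*A - 2*B)*c) * ((3*A - 2*B)*c) ≤ (3*A - 2*B)^2 := by
      have : ((3*A - 2*B)*c) * ((3*A - 2*B)*c) = (3*A-2*B)^2 * c^2 := by ring
      rw [this]
      have hc2 : c^2 ≤ 1 := by nlinarith
      calc (3*A-2*B)^2 * c^2 ≤ (3*A-2*B)^2 * 1 :=
            mul_le_mul_of_nonneg_left hc2 (sq_nonneg _)
        _ = (3*A-2*B)^2 := by ring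
    nlinarith [sq_nonneg (3*A+2*B)]
  have s1 := subst_right_refl p
  have s2 := subst_right_scale p
  rw [intervalIntegral.integral_const_mul, intervalIntegral.integral_const_mul, s1, s2] at hmono
  have h01 : ii 0 1 p p ≤ ii (-1) 1 p p := ii_left_sub p (by norm_num) (by norm_num)
  linarith

lemma norm0_left (p : ℝ[X]) : ii (-2) (-1) (FL p) (FL p) ≤ 22 * ii (-1) 1 p p := by
  have hmono : ii (-2) (-1) (FL p) (FL p) ≤
      (∫ x in (-2:ℝ)..(-1), (18*(p.eval (-2-x) * p.eval (-2-x)))) +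
      ∫ x in (-2:ℝ)..(-1), (8*(p.eval (-3-2*x) * p.eval (-3-2*x))) := by
    rw [← intervalIntegral.integral_add (intg_aff1 p 18 (-2) (-2) (-1)) (intg_aff2 p 8 (-3) (-2) (-1))]
    unfold ii
    apply intervalIntegral.integral_mono_on (by norm_num) (intg _ _ _ _)
      ((intg_aff1 p 18 (-2) (-2) (-1)).add (intg_aff2 p 8 (-3) (-2) (-1)))
    intro x hx
    obtain ⟨hc0, hc1⟩ := chiL_bounds hx
    have he : (FL p).eval x = (3*p.eval (-2-x) - 2*p.eval (-3-2*x)) * chiL.eval x := by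
      simp [FL, gL, eval_comp]
    rw [he]
    set A := p.eval (-2-x); set B := p.eval (-3-2*x); set c := chiL.eval x
    have h1 : ((3*A - 2*B)*c) * ((3*A - 2*B)*c) ≤ (3*A - 2*B)^2 := by
      have : ((3*A - 2*B)*c) * ((3*A - 2*B)*c) = (3*A-2*B)^2 * c^2 := by ring
      rw [this]
      have hc2 : c^2 ≤ 1 := by nlinarith
      calc (3*A-2*B)^2 * c^2 ≤ (3*A-2*B)^2 * 1 :=
            mul_le_mul_of_nonneg_left hc2 (sq_nonneg _)
        _ = (3*A-2*B)^2 := by ring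
    nlinarith [sq_nonneg (3*A+2*B)]
  have s1 := subst_left_refl p
  have s2 := subst_left_scale p
  rw [intervalIntegral.integral_const_mul, intervalIntegral.integral_const_mul, s1, s2] at hmono
  have h01 : ii (-1) 0 p p ≤ ii (-1) 1 p p := ii_right_sub p (by norm_num) (by norm_num)
  linarith

end norms

section norm2

lemma ddFR_eq (p : ℝ[X]) : derivative (derivative (FR p)) =
    derivative (derivative (gR p)) * chiR + 2*(derivative (gR p) * derivative chiR)
      + gR p * derivative (derivative chiR) := by
  unfold FR
  rw [derivative_mul, derivative_add, derivative_mul, derivative_mul]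
  ring

lemma ddFL_eq (p : ℝ[X]) : derivative (derivative (FL p)) =
    derivative (derivative (gL p)) * chiL + 2*(derivative (gL p) * derivative chiL)
      + gL p * derivative (derivative chiL) := by
  unfold FL
  rw [derivative_mul, derivative_add, derivative_mul, derivative_mul]
  ring

set_option maxHeartbeats 2000000 in
lemma norm2_right (p : ℝ[X]) :
    ii 1 2 (derivative (derivative (FR p))) (derivative (derivative (FR p))) ≤
      2376 * ii (-1) 1 p p + 918 * ii (-1) 1 (derivative p) (derivative p)
        + 246 * ii (-1) 1 (derivative (derivative p)) (derivative (derivative p)) := by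
  set dp := derivative p with hdp
  set ddp := derivative (derivative p) with hddp
  have hmono : ii 1 2 (derivative (derivative (FR p))) (derivative (derivative (FR p))) ≤
      (∫ x in (1:ℝ)..2, (54*(ddp.eval (2-x) * ddp.eval (2-x)))) +
      ((∫ x in (1:ℝ)..2, (384*(ddp.eval (3-2*x) * ddp.eval (3-2*x)))) +
      ((∫ x in (1:ℝ)..2, (486*(dp.eval (2-x) * dp.eval (2-x)))) +
      ((∫ x in (1:ℝ)..2, (864*(dp.eval (3-2*x) * dp.eval (3-2*x)))) +
      ((∫ x in (1:ℝ)..2, (1944*(p.eval (2-x) * p.eval (2-x)))) +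
       (∫ x in (1:ℝ)..2, (864*(p.eval (3-2*x) * p.eval (3-2*x)))))))) := by
    rw [← intervalIntegral.integral_add (intg_aff1 p 1944 2 1 2) (intg_aff2 p 864 3 1 2),
      ← intervalIntegral.integral_add (intg_aff2 dp 864 3 1 2)
        ((intg_aff1 p 1944 2 1 2).add (intg_aff2 p 864 3 1 2)),
      ← intervalIntegral.integral_add (intg_aff1 dp 486 2 1 2)
        ((intg_aff2 dp 864 3 1 2).add ((intg_aff1 p 1944 2 1 2).add (intg_aff2 p 864 3 1 2))),
      ← intervalIntegral.integral_add (intg_aff2 ddp 384 3 1 2)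
        ((intg_aff1 dp 486 2 1 2).add ((intg_aff2 dp 864 3 1 2).add
          ((intg_aff1 p 1944 2 1 2).add (intg_aff2 p 864 3 1 2)))),
      ← intervalIntegral.integral_add (intg_aff1 ddp 54 2 1 2)
        ((intg_aff2 ddp 384 3 1 2).add ((intg_aff1 dp 486 2 1 2).add
          ((intg_aff2 dp 864 3 1 2).add ((intg_aff1 p 1944 2 1 2).add
            (intg_aff2 p 864 3 1 2)))))]
    unfold ii
    apply intervalIntegral.integral_mono_on (by norm_num) (intg _ _ _ _)
      ((intg_aff1 ddp 54 2 1 2).add ((intg_aff2 ddp 384 3 1 2).add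
        ((intg_aff1 dp 486 2 1 2).add ((intg_aff2 dp 864 3 1 2).add
          ((intg_aff1 p 1944 2 1 2).add (intg_aff2 p 864 3 1 2))))))
    intro x hx
    have he : (derivative (derivative (FR p))).eval x =
        (3*ddp.eval (2-x) - 8*ddp.eval (3-2*x)) * chiR.eval x
        + 2*((-(3*dp.eval (2-x)) + 4*dp.eval (3-2*x)) * (derivative chiR).eval x)
        + (3*p.eval (2-x) - 2*p.eval (3-2*x)) * (derivative (derivative chiR)).eval x := by
      rw [ddFR_eq, ddgR, dgR]
      simp [gR, eval_comp, hdp, hddp]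
      try ring
    rw [he]
    obtain ⟨hc0, hc1⟩ := chiR_bounds hx
    have hc1sq := dchiR_sq hx
    have hc2sq := ddchiR_sq hx
    set A2 := ddp.eval (2-x); set B2 := ddp.eval (3-2*x)
    set A1 := dp.eval (2-x); set B1 := dp.eval (3-2*x)
    set A0 := p.eval (2-x); set B0 := p.eval (3-2*x)
    set c0 := chiR.eval x; set c1 := (derivative chiR).eval x
    set c2 := (derivative (derivative chiR)).eval x
    have hc0sq : c0^2 ≤ 1 := by nlinarith
    have hX : ((3*A2 - 8*B2)*c0)^2 ≤ 18*A2^2 + 128*B2^2 := by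
      have h1 : ((3*A2 - 8*B2)*c0)^2 = (3*A2-8*B2)^2 * c0^2 := by ring
      rw [h1]
      nlinarith [sq_nonneg (3*A2+8*B2),
        mul_le_mul_of_nonneg_left hc0sq (sq_nonneg (3*A2-8*B2))]
    have hY : ((-(3*A1) + 4*B1)*c1)^2 ≤ (9/4)*(18*A1^2 + 32*B1^2) := by
      have h1 : ((-(3*A1) + 4*B1)*c1)^2 = (-(3*A1)+4*B1)^2 * c1^2 := by ring
      rw [h1]
      nlinarith [sq_nonneg (3*A1+4*B1), sq_nonneg (-(3*A1)+4*B1),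
        mul_le_mul_of_nonneg_left hc1sq (sq_nonneg (-(3*A1)+4*B1))]
    have hZ : ((3*A0 - 2*B0)*c2)^2 ≤ 36*(18*A0^2 + 8*B0^2) := by
      have h1 : ((3*A0 - 2*B0)*c2)^2 = (3*A0-2*B0)^2 * c2^2 := by ring
      rw [h1]
      nlinarith [sq_nonneg (3*A0+2*B0), sq_nonneg (3*A0-2*B0),
        mul_le_mul_of_nonneg_left hc2sq (sq_nonneg (3*A0-2*B0))]
    set X := (3*A2 - 8*B2)*c0; set Y := (-(3*A1) + 4*B1)*c1; set Z := (3*A0 - 2*B0)*c2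
    nlinarith [sq_nonneg (X - 2*Y), sq_nonneg (2*Y - Z), sq_nonneg (X - Z), hX, hY, hZ]
  have s1 := subst_right_refl ddp
  have s2 := subst_right_scale ddp
  have s3 := subst_right_refl dp
  have s4 := subst_right_scale dp
  have s5 := subst_right_refl p
  have s6 := subst_right_scale p
  rw [intervalIntegral.integral_const_mul, intervalIntegral.integral_const_mul,
    intervalIntegral.integral_const_mul, intervalIntegral.integral_const_mul,
    intervalIntegral.integral_const_mul, intervalIntegral.integral_const_mul,
    s1, s2, s3, s4, s5, s6] at hmono
  have h1 : ii 0 1 p p ≤ ii (-1) 1 p p := ii_left_sub p (by norm_num) (by norm_num)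
  have h2 : ii 0 1 dp dp ≤ ii (-1) 1 dp dp := ii_left_sub dp (by norm_num) (by norm_num)
  have h3 : ii 0 1 ddp ddp ≤ ii (-1) 1 ddp ddp := ii_left_sub ddp (by norm_num) (by norm_num)
  linarith

set_option maxHeartbeats 2000000 in
lemma norm2_left (p : ℝ[X]) :
    ii (-2) (-1) (derivative (derivative (FL p))) (derivative (derivative (FL p))) ≤
      2376 * ii (-1) 1 p p + 918 * ii (-1) 1 (derivative p) (derivative p)
        + 246 * ii (-1) 1 (derivative (derivative p)) (derivative (derivative p)) := by
  set dp := derivative p with hdp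
  set ddp := derivative (derivative p) with hddp
  have hmono : ii (-2) (-1) (derivative (derivative (FL p))) (derivative (derivative (FL p))) ≤
      (∫ x in (-2:ℝ)..(-1), (54*(ddp.eval (-2-x) * ddp.eval (-2-x)))) +
      ((∫ x in (-2:ℝ)..(-1), (384*(ddp.eval (-3-2*x) * ddp.eval (-3-2*x)))) +
      ((∫ x in (-2:ℝ)..(-1), (486*(dp.eval (-2-x) * dp.eval (-2-x)))) +
      ((∫ x in (-2:ℝ)..(-1), (864*(dp.eval (-3-2*x) * dp.eval (-3-2*x)))) +
      ((∫ x in (-2:ℝ)..(-1), (1944*(p.eval (-2-x) * p.eval (-2-x)))) +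
       (∫ x in (-2:ℝ)..(-1), (864*(p.eval (-3-2*x) * p.eval (-3-2*x)))))))) := by
    rw [← intervalIntegral.integral_add (intg_aff1 p 1944 (-2) (-2) (-1)) (intg_aff2 p 864 (-3) (-2) (-1)),
      ← intervalIntegral.integral_add (intg_aff2 dp 864 (-3) (-2) (-1))
        ((intg_aff1 p 1944 (-2) (-2) (-1)).add (intg_aff2 p 864 (-3) (-2) (-1))),
      ← intervalIntegral.integral_add (intg_aff1 dp 486 (-2) (-2) (-1))
        ((intg_aff2 dp 864 (-3) (-2) (-1)).add ((intg_aff1 p 1944 (-2) (-2) (-1)).add (intg_aff2 p 864 (-3) (-2) (-1)))),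
      ← intervalIntegral.integral_add (intg_aff2 ddp 384 (-3) (-2) (-1))
        ((intg_aff1 dp 486 (-2) (-2) (-1)).add ((intg_aff2 dp 864 (-3) (-2) (-1)).add
          ((intg_aff1 p 1944 (-2) (-2) (-1)).add (intg_aff2 p 864 (-3) (-2) (-1))))),
      ← intervalIntegral.integral_add (intg_aff1 ddp 54 (-2) (-2) (-1))
        ((intg_aff2 ddp 384 (-3) (-2) (-1)).add ((intg_aff1 dp 486 (-2) (-2) (-1)).add
          ((intg_aff2 dp 864 (-3) (-2) (-1)).add ((intg_aff1 p 1944 (-2) (-2) (-1)).add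
            (intg_aff2 p 864 (-3) (-2) (-1))))))]
    unfold ii
    apply intervalIntegral.integral_mono_on (by norm_num) (intg _ _ _ _)
      ((intg_aff1 ddp 54 (-2) (-2) (-1)).add ((intg_aff2 ddp 384 (-3) (-2) (-1)).add
        ((intg_aff1 dp 486 (-2) (-2) (-1)).add ((intg_aff2 dp 864 (-3) (-2) (-1)).add
          ((intg_aff1 p 1944 (-2) (-2) (-1)).add (intg_aff2 p 864 (-3) (-2) (-1)))))))
    intro x hx
    have he : (derivative (derivative (FL p))).eval x =
        (3*ddp.eval (-2-x) - 8*ddp.eval (-3-2*x)) * chiL.eval x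
        + 2*((-(3*dp.eval (-2-x)) + 4*dp.eval (-3-2*x)) * (derivative chiL).eval x)
        + (3*p.eval (-2-x) - 2*p.eval (-3-2*x)) * (derivative (derivative chiL)).eval x := by
      rw [ddFL_eq, ddgL, dgL]
      simp [gL, eval_comp, hdp, hddp]
      try ring
    rw [he]
    obtain ⟨hc0, hc1⟩ := chiL_bounds hx
    have hc1sq := dchiL_sq hx
    have hc2sq := ddchiL_sq hx
    set A2 := ddp.eval (-2-x); set B2 := ddp.eval (-3-2*x)
    set A1 := dp.eval (-2-x); set B1 := dp.eval (-3-2*x)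
    set A0 := p.eval (-2-x); set B0 := p.eval (-3-2*x)
    set c0 := chiL.eval x; set c1 := (derivative chiL).eval x
    set c2 := (derivative (derivative chiL)).eval x
    have hc0sq : c0^2 ≤ 1 := by nlinarith
    have hX : ((3*A2 - 8*B2)*c0)^2 ≤ 18*A2^2 + 128*B2^2 := by
      have h1 : ((3*A2 - 8*B2)*c0)^2 = (3*A2-8*B2)^2 * c0^2 := by ring
      rw [h1]
      nlinarith [sq_nonneg (3*A2+8*B2),
        mul_le_mul_of_nonneg_left hc0sq (sq_nonneg (3*A2-8*B2))]
    have hY : ((-(3*A1) + 4*B1)*c1)^2 ≤ (9/4)*(18*A1^2 + 32*B1^2) := by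
      have h1 : ((-(3*A1) + 4*B1)*c1)^2 = (-(3*A1)+4*B1)^2 * c1^2 := by ring
      rw [h1]
      nlinarith [sq_nonneg (3*A1+4*B1), sq_nonneg (-(3*A1)+4*B1),
        mul_le_mul_of_nonneg_left hc1sq (sq_nonneg (-(3*A1)+4*B1))]
    have hZ : ((3*A0 - 2*B0)*c2)^2 ≤ 36*(18*A0^2 + 8*B0^2) := by
      have h1 : ((3*A0 - 2*B0)*c2)^2 = (3*A0-2*B0)^2 * c2^2 := by ring
      rw [h1]
      nlinarith [sq_nonneg (3*A0+2*B0), sq_nonneg (3*A0-2*B0),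
        mul_le_mul_of_nonneg_left hc2sq (sq_nonneg (3*A0-2*B0))]
    set X := (3*A2 - 8*B2)*c0; set Y := (-(3*A1) + 4*B1)*c1; set Z := (3*A0 - 2*B0)*c2
    nlinarith [sq_nonneg (X - 2*Y), sq_nonneg (2*Y - Z), sq_nonneg (X - Z), hX, hY, hZ]
  have s1 := subst_left_refl ddp
  have s2 := subst_left_scale ddp
  have s3 := subst_left_refl dp
  have s4 := subst_left_scale dp
  have s5 := subst_left_refl p
  have s6 := subst_left_scale p
  rw [intervalIntegral.integral_const_mul, intervalIntegral.integral_const_mul,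
    intervalIntegral.integral_const_mul, intervalIntegral.integral_const_mul,
    intervalIntegral.integral_const_mul, intervalIntegral.integral_const_mul,
    s1, s2, s3, s4, s5, s6] at hmono
  have h1 : ii (-1) 0 p p ≤ ii (-1) 1 p p := ii_right_sub p (by norm_num) (by norm_num)
  have h2 : ii (-1) 0 dp dp ≤ ii (-1) 1 dp dp := ii_right_sub dp (by norm_num) (by norm_num)
  have h3 : ii (-1) 0 ddp ddp ≤ ii (-1) 1 ddp ddp := ii_right_sub ddp (by norm_num) (by norm_num)
  linarith


end norm2

noncomputable def CCf (p q : ℝ[X]) : ℝ :=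
  ii (-2) (-1) (FL p) (FL q) + ii (-1) 1 p q + ii 1 2 (FR p) (FR q)
noncomputable def DDf (p q : ℝ[X]) : ℝ :=
  ii (-2) (-1) (derivative (derivative (FL p))) (derivative (derivative (FL q)))
    + ii (-1) 1 (derivative (derivative p)) (derivative (derivative q))
    + ii 1 2 (derivative (derivative (FR p))) (derivative (derivative (FR q)))

lemma CCf_le (p : ℝ[X]) : CCf p p ≤ 45 * ii (-1) 1 p p := by
  have h1 := norm0_right p
  have h2 := norm0_left p
  unfold CCf
  linarith

lemma DDf_le (p : ℝ[X]) : DDf p p ≤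
    250000 * (ii (-1) 1 p p
      + ii (-1) 1 (derivative (derivative p)) (derivative (derivative p))) := by
  have h1 := norm2_right p
  have h2 := norm2_left p
  have h3 := landau p
  have h4 := ii_nonneg (by norm_num : (-1:ℝ) ≤ 1) p
  have h5 := ii_nonneg (by norm_num : (-1:ℝ) ≤ 1) (derivative (derivative p))
  unfold DDf
  linarith

section gram

noncomputable def slc (s : Finset ℕ) (co : ℕ → ℝ) (A : ℕ → ℝ[X]) : ℝ[X] :=
  ∑ i ∈ s, Polynomial.C (co i) * A i

lemma eval_slice (s : Finset ℕ) (co : ℕ → ℝ) (A : ℕ → ℝ[X]) (x : ℝ) :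
    (slc s co A).eval x = ∑ i ∈ s, co i * (A i).eval x := by
  unfold slc
  rw [Polynomial.eval_finset_sum]
  exact Finset.sum_congr rfl fun i _ => by simp

lemma derivative_slice (s : Finset ℕ) (co : ℕ → ℝ) (A : ℕ → ℝ[X]) :
    derivative (slc s co A) = slc s co (fun i => derivative (A i)) := by
  unfold slc
  rw [map_sum]
  exact Finset.sum_congr rfl fun i _ => Polynomial.derivative_C_mul _ _

lemma FR_add (p q : ℝ[X]) : FR (p + q) = FR p + FR q := by
  unfold FR gR; rw [Polynomial.add_comp, Polynomial.add_comp]; ring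
lemma FR_Cmul (c : ℝ) (p : ℝ[X]) : FR (Polynomial.C c * p) = Polynomial.C c * FR p := by
  unfold FR gR; rw [Polynomial.mul_comp, Polynomial.mul_comp, Polynomial.C_comp,
    Polynomial.C_comp]; ring
lemma FL_add (p q : ℝ[X]) : FL (p + q) = FL p + FL q := by
  unfold FL gL; rw [Polynomial.add_comp, Polynomial.add_comp]; ring
lemma FL_Cmul (c : ℝ) (p : ℝ[X]) : FL (Polynomial.C c * p) = Polynomial.C c * FL p := by
  unfold FL gL; rw [Polynomial.mul_comp, Polynomial.mul_comp, Polynomial.C_comp,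
    Polynomial.C_comp]; ring
lemma FR_zero : FR 0 = 0 := by unfold FR gR; simp
lemma FL_zero : FL 0 = 0 := by unfold FL gL; simp

lemma FR_slice (s : Finset ℕ) (co : ℕ → ℝ) (A : ℕ → ℝ[X]) :
    FR (slc s co A) = slc s co (fun i => FR (A i)) := by
  classical
  unfold slc
  induction s using Finset.induction_on with
  | empty => simpa using FR_zero
  | insert _ _ h ih => rw [Finset.sum_insert h, Finset.sum_insert h, FR_add, FR_Cmul, ih]

lemma FL_slice (s : Finset ℕ) (co : ℕ → ℝ) (A : ℕ → ℝ[X]) :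
    FL (slc s co A) = slc s co (fun i => FL (A i)) := by
  classical
  unfold slc
  induction s using Finset.induction_on with
  | empty => simpa using FL_zero
  | insert _ _ h ih => rw [Finset.sum_insert h, Finset.sum_insert h, FL_add, FL_Cmul, ih]

lemma contPQ (P Q : ℝ[X]) : Continuous fun x : ℝ => P.eval x * Q.eval x :=
  (P.continuous_aeval).mul (Q.continuous_aeval)

lemma ii_slice_slice (a b : ℝ) (s : Finset ℕ) (co co' : ℕ → ℝ) (A B : ℕ → ℝ[X]) :
    ii a b (slc s co A) (slc s co' B)
      = ∑ i ∈ s, ∑ j ∈ s, co i * co' j * ii a b (A i) (B j) := by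
  have hpt : ∀ x : ℝ, (slc s co A).eval x * (slc s co' B).eval x
      = ∑ i ∈ s, ∑ j ∈ s, co i * co' j * ((A i).eval x * (B j).eval x) := by
    intro x
    rw [eval_slice, eval_slice, Finset.sum_mul_sum]
    exact Finset.sum_congr rfl fun i _ => Finset.sum_congr rfl fun j _ => by ring
  unfold ii
  simp only [hpt]
  rw [intervalIntegral.integral_finset_sum (fun i _ =>
    (continuous_finset_sum _ fun j _ =>
      continuous_const.fun_mul (contPQ (A i) (B j))).intervalIntegrable a b)]
  refine Finset.sum_congr rfl fun i _ => ?_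
  rw [intervalIntegral.integral_finset_sum (fun j _ =>
    (continuous_const.fun_mul (contPQ (A i) (B j))).intervalIntegrable a b)]
  refine Finset.sum_congr rfl fun j _ => ?_
  rw [intervalIntegral.integral_const_mul]

noncomputable def GS (s : Finset ℕ) (c d e f : ℝ) (A B A' B' : ℕ → ℝ[X]) : ℝ :=
  ∑ i ∈ s, ∑ j ∈ s, ii c d (A i) (B j) * ii e f (A' i) (B' j)

lemma GS_flip (s : Finset ℕ) (c d e f : ℝ) (A B A' B' : ℕ → ℝ[X]) :
    GS s c d e f A B A' B' = GS s e f c d A' B' A B := by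
  unfold GS
  exact Finset.sum_congr rfl fun i _ => Finset.sum_congr rfl fun j _ => by ring

lemma GS_eq (s : Finset ℕ) (c d e f : ℝ) (A B A' B' : ℕ → ℝ[X]) :
    GS s c d e f A B A' B' = ∫ x in c..d,
      ii e f (slc s (fun i => (A i).eval x) A') (slc s (fun i => (B i).eval x) B') := by
  have hpt : ∀ x : ℝ,
      ii e f (slc s (fun i => (A i).eval x) A') (slc s (fun i => (B i).eval x) B')
      = ∑ i ∈ s, ∑ j ∈ s, (A i).eval x * (B j).eval x * ii e f (A' i) (B' j) := by
    intro x
    rw [ii_slice_slice]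
  simp only [hpt]
  rw [intervalIntegral.integral_finset_sum (fun i _ =>
    (continuous_finset_sum _ fun j _ =>
      (contPQ (A i) (B j)).fun_mul continuous_const).intervalIntegrable c d)]
  refine Finset.sum_congr rfl fun i _ => ?_
  rw [intervalIntegral.integral_finset_sum (fun j _ =>
    ((contPQ (A i) (B j)).fun_mul continuous_const).intervalIntegrable c d)]
  refine Finset.sum_congr rfl fun j _ => ?_
  rw [intervalIntegral.integral_mul_const]
  rfl

lemma cont_iislice (s : Finset ℕ) (e f : ℝ) (A B A' B' : ℕ → ℝ[X]) :
    Continuous fun x : ℝ =>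
      ii e f (slc s (fun i => (A i).eval x) A') (slc s (fun i => (B i).eval x) B') := by
  have hpt : ∀ x : ℝ,
      ii e f (slc s (fun i => (A i).eval x) A') (slc s (fun i => (B i).eval x) B')
      = ∑ i ∈ s, ∑ j ∈ s, (A i).eval x * (B j).eval x * ii e f (A' i) (B' j) := by
    intro x
    rw [ii_slice_slice]
  simp only [hpt]
  exact continuous_finset_sum _ fun i _ => continuous_finset_sum _ fun j _ =>
    (contPQ (A i) (B j)).mul continuous_const

lemma GS_nonneg (s : Finset ℕ) {c d e f : ℝ} (hcd : c ≤ d) (hef : e ≤ f)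
    (A A' : ℕ → ℝ[X]) : 0 ≤ GS s c d e f A A A' A' := by
  rw [GS_eq]
  apply intervalIntegral.integral_nonneg hcd
  intro x _
  exact ii_nonneg hef _

lemma GS_amgm (s : Finset ℕ) {c d e f : ℝ} (hcd : c ≤ d) (hef : e ≤ f)
    (A B A' B' : ℕ → ℝ[X]) :
    GS s c d e f A B A' B' ≤
      GS s c d e f A A A' A' / 2 + GS s c d e f B B B' B' / 2 := by
  rw [GS_eq, GS_eq, GS_eq]
  have hstep : (∫ x in c..d,
      ii e f (slc s (fun i => (A i).eval x) A') (slc s (fun i => (B i).eval x) B')) ≤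
      ∫ x in c..d,
        (ii e f (slc s (fun i => (A i).eval x) A') (slc s (fun i => (A i).eval x) A') / 2
        + ii e f (slc s (fun i => (B i).eval x) B')
            (slc s (fun i => (B i).eval x) B') / 2) := by
    apply intervalIntegral.integral_mono_on hcd
      ((cont_iislice s e f A B A' B').intervalIntegrable c d)
      ((((cont_iislice s e f A A A' A').div_const 2).add
        ((cont_iislice s e f B B B' B').div_const 2)).intervalIntegrable c d)
    intro x _
    exact ii_amgm hef _ _
  calc (∫ x in c..d,
      ii e f (slc s (fun i => (A i).eval x) A') (slc s (fun i => (B i).eval x) B'))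
      ≤ _ := hstep
    _ = (∫ x in c..d, ii e f (slc s (fun i => (A i).eval x) A')
          (slc s (fun i => (A i).eval x) A')) / 2
        + (∫ x in c..d, ii e f (slc s (fun i => (B i).eval x) B')
            (slc s (fun i => (B i).eval x) B')) / 2 := by
        rw [intervalIntegral.integral_add
          (((cont_iislice s e f A A A' A').div_const 2).intervalIntegrable c d)
          (((cont_iislice s e f B B B' B').div_const 2).intervalIntegrable c d),
          intervalIntegral.integral_div, intervalIntegral.integral_div]

end gram

section aggregation

lemma GS_sum0 (s : Finset ℕ) {c d : ℝ} (hcd : c ≤ d) (A Q : ℕ → ℝ[X]) :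
    GS s c d (-2) (-1) A A (fun i => FL (Q i)) (fun i => FL (Q i))
      + GS s c d (-1) 1 A A Q Q
      + GS s c d 1 2 A A (fun i => FR (Q i)) (fun i => FR (Q i))
      ≤ 45 * GS s c d (-1) 1 A A Q Q := by
  simp only [GS_eq]
  rw [← intervalIntegral.integral_add
      ((cont_iislice s (-2) (-1) A A _ _).intervalIntegrable c d)
      ((cont_iislice s (-1) 1 A A Q Q).intervalIntegrable c d),
    ← intervalIntegral.integral_add
      (((cont_iislice s (-2) (-1) A A _ _).fun_add
        (cont_iislice s (-1) 1 A A Q Q)).intervalIntegrable c d)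
      ((cont_iislice s 1 2 A A _ _).intervalIntegrable c d),
    ← intervalIntegral.integral_const_mul]
  apply intervalIntegral.integral_mono_on hcd
    ((((cont_iislice s (-2) (-1) A A _ _).fun_add
        (cont_iislice s (-1) 1 A A Q Q)).fun_add
      (cont_iislice s 1 2 A A _ _)).intervalIntegrable c d)
    (((cont_iislice s (-1) 1 A A Q Q).const_mul' 45).intervalIntegrable c d)
  intro x _
  have h1 : slc s (fun i => (A i).eval x) (fun i => FL (Q i))
      = FL (slc s (fun i => (A i).eval x) Q) := (FL_slice _ _ _).symm
  have h2 : slc s (fun i => (A i).eval x) (fun i => FR (Q i))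
      = FR (slc s (fun i => (A i).eval x) Q) := (FR_slice _ _ _).symm
  rw [h1, h2]
  have := CCf_le (slc s (fun i => (A i).eval x) Q)
  unfold CCf at this
  linarith

lemma GS_sum2 (s : Finset ℕ) (A P : ℕ → ℝ[X]) :
    GS s (-1) 1 (-2) (-1) A A (fun i => derivative (derivative (FL (P i))))
        (fun i => derivative (derivative (FL (P i))))
      + GS s (-1) 1 (-1) 1 A A (fun i => derivative (derivative (P i)))
          (fun i => derivative (derivative (P i)))
      + GS s (-1) 1 1 2 A A (fun i => derivative (derivative (FR (P i))))
          (fun i => derivative (derivative (FR (P i))))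
      ≤ 250000 * (GS s (-1) 1 (-1) 1 A A P P
          + GS s (-1) 1 (-1) 1 A A (fun i => derivative (derivative (P i)))
              (fun i => derivative (derivative (P i)))) := by
  simp only [GS_eq]
  rw [← intervalIntegral.integral_add
      ((cont_iislice s (-2) (-1) A A _ _).intervalIntegrable (-1) 1)
      ((cont_iislice s (-1) 1 A A _ _).intervalIntegrable (-1) 1),
    ← intervalIntegral.integral_add
      (((cont_iislice s (-2) (-1) A A _ _).fun_add
        (cont_iislice s (-1) 1 A A _ _)).intervalIntegrable (-1) 1),
    ← intervalIntegral.integral_add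
      ((cont_iislice s (-1) 1 A A P P).intervalIntegrable (-1) 1)
      ((cont_iislice s (-1) 1 A A _ _).intervalIntegrable (-1) 1),
    ← intervalIntegral.integral_const_mul]
  swap
  · exact (cont_iislice s 1 2 A A _ _).intervalIntegrable (-1) 1
  apply intervalIntegral.integral_mono_on (by norm_num)
    ((((cont_iislice s (-2) (-1) A A _ _).fun_add
        (cont_iislice s (-1) 1 A A _ _)).fun_add
      (cont_iislice s 1 2 A A _ _)).intervalIntegrable (-1) 1)
    ((((cont_iislice s (-1) 1 A A P P).fun_add
      (cont_iislice s (-1) 1 A A _ _)).const_mul' 250000).intervalIntegrable (-1) 1)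
  intro x _
  set co := fun i => (A i).eval x with hco
  have h1 : slc s co (fun i => derivative (derivative (FL (P i))))
      = derivative (derivative (FL (slc s co P))) := by
    rw [FL_slice, derivative_slice, derivative_slice]
  have h2 : slc s co (fun i => derivative (derivative (FR (P i))))
      = derivative (derivative (FR (slc s co P))) := by
    rw [FR_slice, derivative_slice, derivative_slice]
  have h3 : slc s co (fun i => derivative (derivative (P i)))
      = derivative (derivative (slc s co P)) := by
    rw [derivative_slice, derivative_slice]
  rw [h1, h2, h3]
  have := DDf_le (slc s co P)
  unfold DDf at this
  linarith

end aggregation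

section reduction


variable (W : ℕ) (a : ℕ → ℕ → ℝ)

noncomputable def pp : ℕ → ℝ[X] := fun i => X^i
noncomputable def qq : ℕ → ℝ[X] := fun i => ∑ j ∈ Finset.range (W+1), Polynomial.C (a i j) * X^j

lemma polyFun_eq (x y : ℝ) : polyFun W a (x, y)
    = ∑ i ∈ Finset.range (W+1), (pp i).eval x * (qq W a i).eval y := by
  unfold polyFun pp qq
  refine Finset.sum_congr rfl fun i _ => ?_
  rw [Polynomial.eval_finset_sum, Finset.mul_sum]
  refine Finset.sum_congr rfl fun j _ => ?_
  simp; ring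

lemma hasDerivAt_sum_slices (c : ℕ → ℝ) (B : ℕ → ℝ[X]) (t : ℝ) :
    HasDerivAt (fun z => ∑ i ∈ Finset.range (W+1), c i * (B i).eval z)
      (∑ i ∈ Finset.range (W+1), c i * (derivative (B i)).eval t) t := by
  apply HasDerivAt.fun_sum
  intro i _
  exact ((B i).hasDerivAt t).const_mul (c i)

lemma hasDerivAt_sum_slices' (c : ℕ → ℝ) (B : ℕ → ℝ[X]) (t : ℝ) :
    HasDerivAt (fun z => ∑ i ∈ Finset.range (W+1), (B i).eval z * c i)
      (∑ i ∈ Finset.range (W+1), (derivative (B i)).eval t * c i) t := by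
  apply HasDerivAt.fun_sum
  intro i _
  exact ((B i).hasDerivAt t).mul_const (c i)

lemma pder11_eq (x y : ℝ) : pder 1 1 (polyFun W a) (x, y)
    = ∑ i ∈ Finset.range (W+1),
        (derivative (pp i)).eval x * (derivative (qq W a i)).eval y := by
  unfold pder
  simp only [iteratedDeriv_one]
  have hinner : (fun ξ => deriv (fun η => polyFun W a (ξ, η)) y)
      = fun ξ => ∑ i ∈ Finset.range (W+1), (pp i).eval ξ * (derivative (qq W a i)).eval y := by
    funext ξ
    have h1 : (fun η => polyFun W a (ξ, η))
        = fun η => ∑ i ∈ Finset.range (W+1), (pp i).eval ξ * (qq W a i).eval η := by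
      funext η; exact polyFun_eq W a ξ η
    rw [h1]
    exact (hasDerivAt_sum_slices W (fun i => (pp i).eval ξ) (fun i => qq W a i) y).deriv
  rw [hinner]
  exact (hasDerivAt_sum_slices' W (fun i => (derivative (qq W a i)).eval y)
    (fun i => pp i) x).deriv

lemma pder20_eq (x y : ℝ) : pder 2 0 (polyFun W a) (x, y)
    = ∑ i ∈ Finset.range (W+1),
        (derivative (derivative (pp i))).eval x * (qq W a i).eval y := by
  unfold pder
  simp only [iteratedDeriv_zero]
  rw [show (2:ℕ) = 1 + 1 from rfl, iteratedDeriv_succ, iteratedDeriv_one]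
  have h0 : (fun ξ => polyFun W a (ξ, y))
      = fun ξ => ∑ i ∈ Finset.range (W+1), (qq W a i).eval y * (pp i).eval ξ := by
    funext ξ
    rw [polyFun_eq W a ξ y]
    exact Finset.sum_congr rfl fun i _ => by ring
  rw [h0]
  have h1 : deriv (fun ξ => ∑ i ∈ Finset.range (W+1), (qq W a i).eval y * (pp i).eval ξ)
      = fun ξ => ∑ i ∈ Finset.range (W+1), (qq W a i).eval y * (derivative (pp i)).eval ξ := by
    funext ξ
    exact (hasDerivAt_sum_slices W (fun i => (qq W a i).eval y) (fun i => pp i) ξ).deriv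
  rw [h1]
  have h2 := (hasDerivAt_sum_slices W (fun i => (qq W a i).eval y)
    (fun i => derivative (pp i)) x).deriv
  rw [h2]
  exact Finset.sum_congr rfl fun i _ => by ring

lemma pder02_eq (x y : ℝ) : pder 0 2 (polyFun W a) (x, y)
    = ∑ i ∈ Finset.range (W+1),
        (pp i).eval x * (derivative (derivative (qq W a i))).eval y := by
  unfold pder
  simp only [iteratedDeriv_zero]
  rw [show (2:ℕ) = 1 + 1 from rfl, iteratedDeriv_succ, iteratedDeriv_one]
  have h0 : (fun η => polyFun W a (x, η))
      = fun η => ∑ i ∈ Finset.range (W+1), (pp i).eval x * (qq W a i).eval η := by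
    funext η; exact polyFun_eq W a x η
  rw [h0]
  have h1 : deriv (fun η => ∑ i ∈ Finset.range (W+1), (pp i).eval x * (qq W a i).eval η)
      = fun η => ∑ i ∈ Finset.range (W+1), (pp i).eval x * (derivative (qq W a i)).eval η := by
    funext η
    exact (hasDerivAt_sum_slices W (fun i => (pp i).eval x) (fun i => qq W a i) η).deriv
  rw [h1]
  exact (hasDerivAt_sum_slices W (fun i => (pp i).eval x)
    (fun i => derivative (qq W a i)) y).deriv

end reduction

section core

lemma GS_orient (s : Finset ℕ) (c d e f : ℝ) (A B A' B' : ℕ → ℝ[X]) :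
    (∑ i ∈ s, ∑ j ∈ s, ii c d (A i) (B j) * ii e f (B' j) (A' i))
      = GS s c d e f A B A' B' := by
  unfold GS
  exact Finset.sum_congr rfl fun i _ => Finset.sum_congr rfl fun j _ => by
    rw [ii_symm e f (B' j) (A' i)]

lemma core (s : Finset ℕ) (P Q : ℕ → ℝ[X]) :
    GS s (-1) 1 (-1) 1 (fun i => derivative (P i)) (fun i => derivative (P i))
        (fun i => derivative (Q i)) (fun i => derivative (Q i))
      ≤ 22500000 * (GS s (-1) 1 (-1) 1 (fun i => derivative (derivative (P i)))
            (fun i => derivative (derivative (P i))) Q Q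
          + GS s (-1) 1 (-1) 1 P P (fun i => derivative (derivative (Q i)))
              (fun i => derivative (derivative (Q i)))
          + GS s (-1) 1 (-1) 1 P P Q Q) := by
  -- T1 : the full extended Dirichlet-type Gram pairing
  set T1 : ℝ := ∑ i ∈ s, ∑ j ∈ s, AAf (P i) (P j) * AAf (Q i) (Q j) with hT1
  -- Step 1 : LHS ≤ T1 (the middle-middle term plus nonnegative terms)
  have step1 : GS s (-1) 1 (-1) 1 (fun i => derivative (P i)) (fun i => derivative (P i))
      (fun i => derivative (Q i)) (fun i => derivative (Q i)) ≤ T1 := by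
    have hexp : T1 =
        GS s (-2) (-1) (-2) (-1) (fun i => derivative (FL (P i))) (fun i => derivative (FL (P i)))
          (fun i => derivative (FL (Q i))) (fun i => derivative (FL (Q i)))
      + GS s (-2) (-1) (-1) 1 (fun i => derivative (FL (P i))) (fun i => derivative (FL (P i)))
          (fun i => derivative (Q i)) (fun i => derivative (Q i))
      + GS s (-2) (-1) 1 2 (fun i => derivative (FL (P i))) (fun i => derivative (FL (P i)))
          (fun i => derivative (FR (Q i))) (fun i => derivative (FR (Q i)))
      + GS s (-1) 1 (-2) (-1) (fun i => derivative (P i)) (fun i => derivative (P i))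
          (fun i => derivative (FL (Q i))) (fun i => derivative (FL (Q i)))
      + GS s (-1) 1 (-1) 1 (fun i => derivative (P i)) (fun i => derivative (P i))
          (fun i => derivative (Q i)) (fun i => derivative (Q i))
      + GS s (-1) 1 1 2 (fun i => derivative (P i)) (fun i => derivative (P i))
          (fun i => derivative (FR (Q i))) (fun i => derivative (FR (Q i)))
      + GS s 1 2 (-2) (-1) (fun i => derivative (FR (P i))) (fun i => derivative (FR (P i)))
          (fun i => derivative (FL (Q i))) (fun i => derivative (FL (Q i)))
      + GS s 1 2 (-1) 1 (fun i => derivative (FR (P i))) (fun i => derivative (FR (P i)))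
          (fun i => derivative (Q i)) (fun i => derivative (Q i))
      + GS s 1 2 1 2 (fun i => derivative (FR (P i))) (fun i => derivative (FR (P i)))
          (fun i => derivative (FR (Q i))) (fun i => derivative (FR (Q i))) := by
      rw [hT1]
      unfold GS
      rw [← Finset.sum_add_distrib, ← Finset.sum_add_distrib, ← Finset.sum_add_distrib,
        ← Finset.sum_add_distrib, ← Finset.sum_add_distrib, ← Finset.sum_add_distrib,
        ← Finset.sum_add_distrib, ← Finset.sum_add_distrib]
      refine Finset.sum_congr rfl fun i _ => ?_
      rw [← Finset.sum_add_distrib, ← Finset.sum_add_distrib, ← Finset.sum_add_distrib,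
        ← Finset.sum_add_distrib, ← Finset.sum_add_distrib, ← Finset.sum_add_distrib,
        ← Finset.sum_add_distrib, ← Finset.sum_add_distrib]
      refine Finset.sum_congr rfl fun j _ => ?_
      unfold AAf
      ring
    rw [hexp]
    have n1 := GS_nonneg s (by norm_num : (-2:ℝ) ≤ -1) (by norm_num : (-2:ℝ) ≤ -1)
      (fun i => derivative (FL (P i))) (fun i => derivative (FL (Q i)))
    have n2 := GS_nonneg s (by norm_num : (-2:ℝ) ≤ -1) (by norm_num : (-1:ℝ) ≤ 1)
      (fun i => derivative (FL (P i))) (fun i => derivative (Q i))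
    have n3 := GS_nonneg s (by norm_num : (-2:ℝ) ≤ -1) (by norm_num : (1:ℝ) ≤ 2)
      (fun i => derivative (FL (P i))) (fun i => derivative (FR (Q i)))
    have n4 := GS_nonneg s (by norm_num : (-1:ℝ) ≤ 1) (by norm_num : (-2:ℝ) ≤ -1)
      (fun i => derivative (P i)) (fun i => derivative (FL (Q i)))
    have n6 := GS_nonneg s (by norm_num : (-1:ℝ) ≤ 1) (by norm_num : (1:ℝ) ≤ 2)
      (fun i => derivative (P i)) (fun i => derivative (FR (Q i)))
    have n7 := GS_nonneg s (by norm_num : (1:ℝ) ≤ 2) (by norm_num : (-2:ℝ) ≤ -1)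
      (fun i => derivative (FR (P i))) (fun i => derivative (FL (Q i)))
    have n8 := GS_nonneg s (by norm_num : (1:ℝ) ≤ 2) (by norm_num : (-1:ℝ) ≤ 1)
      (fun i => derivative (FR (P i))) (fun i => derivative (Q i))
    have n9 := GS_nonneg s (by norm_num : (1:ℝ) ≤ 2) (by norm_num : (1:ℝ) ≤ 2)
      (fun i => derivative (FR (P i))) (fun i => derivative (FR (Q i)))
    linarith
  -- Step 2 : T1 as the mixed-second-derivative pairing (integration by parts twice)
  have step2 : T1 = ∑ i ∈ s, ∑ j ∈ s, BBf (P i) (P j) * BBf (Q j) (Q i) := by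
    rw [hT1]
    refine Finset.sum_congr rfl fun i _ => Finset.sum_congr rfl fun j _ => ?_
    rw [AAf_symm (Q i) (Q j), AAf_eq_neg_BBf (P i) (P j), AAf_eq_neg_BBf (Q j) (Q i)]
    ring
  -- Step 3 : expand into 9 piece-pair Gram pairings
  have step3 : T1 =
      (GS s (-2) (-1) (-2) (-1) (fun i => derivative (derivative (FL (P i)))) (fun i => FL (P i)) (fun i => FL (Q i)) (fun i => derivative (derivative (FL (Q i))))) +
      (GS s (-2) (-1) (-1) 1 (fun i => derivative (derivative (FL (P i)))) (fun i => FL (P i)) Q (fun i => derivative (derivative (Q i)))) +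
      (GS s (-2) (-1) 1 2 (fun i => derivative (derivative (FL (P i)))) (fun i => FL (P i)) (fun i => FR (Q i)) (fun i => derivative (derivative (FR (Q i))))) +
      (GS s (-1) 1 (-2) (-1) (fun i => derivative (derivative (P i))) P (fun i => FL (Q i)) (fun i => derivative (derivative (FL (Q i))))) +
      (GS s (-1) 1 (-1) 1 (fun i => derivative (derivative (P i))) P Q (fun i => derivative (derivative (Q i)))) +
      (GS s (-1) 1 1 2 (fun i => derivative (derivative (P i))) P (fun i => FR (Q i)) (fun i => derivative (derivative (FR (Q i))))) +
      (GS s 1 2 (-2) (-1) (fun i => derivative (derivative (FR (P i)))) (fun i => FR (P i)) (fun i => FL (Q i)) (fun i => derivative (derivative (FL (Q i))))) +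
      (GS s 1 2 (-1) 1 (fun i => derivative (derivative (FR (P i)))) (fun i => FR (P i)) Q (fun i => derivative (derivative (Q i)))) +
      (GS s 1 2 1 2 (fun i => derivative (derivative (FR (P i)))) (fun i => FR (P i)) (fun i => FR (Q i)) (fun i => derivative (derivative (FR (Q i))))) := by
    rw [step2]
    have hpt : ∀ i j, BBf (P i) (P j) * BBf (Q j) (Q i) =
          (ii (-2) (-1) (derivative (derivative (FL (P i)))) (FL (P j)) * ii (-2) (-1) (FL (Q i)) (derivative (derivative (FL (Q j))))) +
          (ii (-2) (-1) (derivative (derivative (FL (P i)))) (FL (P j)) * ii (-1) 1 (Q i) (derivative (derivative (Q j)))) +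
          (ii (-2) (-1) (derivative (derivative (FL (P i)))) (FL (P j)) * ii 1 2 (FR (Q i)) (derivative (derivative (FR (Q j))))) +
          (ii (-1) 1 (derivative (derivative (P i))) (P j) * ii (-2) (-1) (FL (Q i)) (derivative (derivative (FL (Q j))))) +
          (ii (-1) 1 (derivative (derivative (P i))) (P j) * ii (-1) 1 (Q i) (derivative (derivative (Q j)))) +
          (ii (-1) 1 (derivative (derivative (P i))) (P j) * ii 1 2 (FR (Q i)) (derivative (derivative (FR (Q j))))) +
          (ii 1 2 (derivative (derivative (FR (P i)))) (FR (P j)) * ii (-2) (-1) (FL (Q i)) (derivative (derivative (FL (Q j))))) +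
          (ii 1 2 (derivative (derivative (FR (P i)))) (FR (P j)) * ii (-1) 1 (Q i) (derivative (derivative (Q j)))) +
          (ii 1 2 (derivative (derivative (FR (P i)))) (FR (P j)) * ii 1 2 (FR (Q i)) (derivative (derivative (FR (Q j))))) := by
      intro i j
      unfold BBf
      rw [ii_symm (-2) (-1) (derivative (derivative (FL (Q j)))) (FL (Q i)),
        ii_symm (-1) 1 (derivative (derivative (Q j))) (Q i),
        ii_symm 1 2 (derivative (derivative (FR (Q j)))) (FR (Q i))]
      ring
    calc (∑ i ∈ s, ∑ j ∈ s, BBf (P i) (P j) * BBf (Q j) (Q i))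
        = ∑ i ∈ s, ∑ j ∈ s,
          ((ii (-2) (-1) (derivative (derivative (FL (P i)))) (FL (P j)) * ii (-2) (-1) (FL (Q i)) (derivative (derivative (FL (Q j))))) +
          (ii (-2) (-1) (derivative (derivative (FL (P i)))) (FL (P j)) * ii (-1) 1 (Q i) (derivative (derivative (Q j)))) +
          (ii (-2) (-1) (derivative (derivative (FL (P i)))) (FL (P j)) * ii 1 2 (FR (Q i)) (derivative (derivative (FR (Q j))))) +
          (ii (-1) 1 (derivative (derivative (P i))) (P j) * ii (-2) (-1) (FL (Q i)) (derivative (derivative (FL (Q j))))) +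
          (ii (-1) 1 (derivative (derivative (P i))) (P j) * ii (-1) 1 (Q i) (derivative (derivative (Q j)))) +
          (ii (-1) 1 (derivative (derivative (P i))) (P j) * ii 1 2 (FR (Q i)) (derivative (derivative (FR (Q j))))) +
          (ii 1 2 (derivative (derivative (FR (P i)))) (FR (P j)) * ii (-2) (-1) (FL (Q i)) (derivative (derivative (FL (Q j))))) +
          (ii 1 2 (derivative (derivative (FR (P i)))) (FR (P j)) * ii (-1) 1 (Q i) (derivative (derivative (Q j)))) +
          (ii 1 2 (derivative (derivative (FR (P i)))) (FR (P j)) * ii 1 2 (FR (Q i)) (derivative (derivative (FR (Q j)))))) :=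
          Finset.sum_congr rfl fun i _ => Finset.sum_congr rfl fun j _ => hpt i j
      _ = _ := by
          simp only [Finset.sum_add_distrib]
          rfl
  have am11 : GS s (-2) (-1) (-2) (-1) (fun i => derivative (derivative (FL (P i)))) (fun i => FL (P i)) (fun i => FL (Q i)) (fun i => derivative (derivative (FL (Q i)))) ≤ (GS s (-2) (-1) (-2) (-1) (fun i => derivative (derivative (FL (P i)))) (fun i => derivative (derivative (FL (P i)))) (fun i => FL (Q i)) (fun i => FL (Q i)))/2 + (GS s (-2) (-1) (-2) (-1) (fun i => FL (P i)) (fun i => FL (P i)) (fun i => derivative (derivative (FL (Q i)))) (fun i => derivative (derivative (FL (Q i)))))/2 :=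
    GS_amgm s (by norm_num : (-2:ℝ) ≤ -1) (by norm_num : (-2:ℝ) ≤ -1) _ _ _ _
  have am12 : GS s (-2) (-1) (-1) 1 (fun i => derivative (derivative (FL (P i)))) (fun i => FL (P i)) Q (fun i => derivative (derivative (Q i))) ≤ (GS s (-2) (-1) (-1) 1 (fun i => derivative (derivative (FL (P i)))) (fun i => derivative (derivative (FL (P i)))) Q Q)/2 + (GS s (-2) (-1) (-1) 1 (fun i => FL (P i)) (fun i => FL (P i)) (fun i => derivative (derivative (Q i))) (fun i => derivative (derivative (Q i))))/2 :=
    GS_amgm s (by norm_num : (-2:ℝ) ≤ -1) (by norm_num : (-1:ℝ) ≤ 1) _ _ _ _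
  have am13 : GS s (-2) (-1) 1 2 (fun i => derivative (derivative (FL (P i)))) (fun i => FL (P i)) (fun i => FR (Q i)) (fun i => derivative (derivative (FR (Q i)))) ≤ (GS s (-2) (-1) 1 2 (fun i => derivative (derivative (FL (P i)))) (fun i => derivative (derivative (FL (P i)))) (fun i => FR (Q i)) (fun i => FR (Q i)))/2 + (GS s (-2) (-1) 1 2 (fun i => FL (P i)) (fun i => FL (P i)) (fun i => derivative (derivative (FR (Q i)))) (fun i => derivative (derivative (FR (Q i)))))/2 :=
    GS_amgm s (by norm_num : (-2:ℝ) ≤ -1) (by norm_num : (1:ℝ) ≤ 2) _ _ _ _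
  have am21 : GS s (-1) 1 (-2) (-1) (fun i => derivative (derivative (P i))) P (fun i => FL (Q i)) (fun i => derivative (derivative (FL (Q i)))) ≤ (GS s (-1) 1 (-2) (-1) (fun i => derivative (derivative (P i))) (fun i => derivative (derivative (P i))) (fun i => FL (Q i)) (fun i => FL (Q i)))/2 + (GS s (-1) 1 (-2) (-1) P P (fun i => derivative (derivative (FL (Q i)))) (fun i => derivative (derivative (FL (Q i)))))/2 :=
    GS_amgm s (by norm_num : (-1:ℝ) ≤ 1) (by norm_num : (-2:ℝ) ≤ -1) _ _ _ _
  have am22 : GS s (-1) 1 (-1) 1 (fun i => derivative (derivative (P i))) P Q (fun i => derivative (derivative (Q i))) ≤ (GS s (-1) 1 (-1) 1 (fun i => derivative (derivative (P i))) (fun i => derivative (derivative (P i))) Q Q)/2 + (GS s (-1) 1 (-1) 1 P P (fun i => derivative (derivative (Q i))) (fun i => derivative (derivative (Q i))))/2 :=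
    GS_amgm s (by norm_num : (-1:ℝ) ≤ 1) (by norm_num : (-1:ℝ) ≤ 1) _ _ _ _
  have am23 : GS s (-1) 1 1 2 (fun i => derivative (derivative (P i))) P (fun i => FR (Q i)) (fun i => derivative (derivative (FR (Q i)))) ≤ (GS s (-1) 1 1 2 (fun i => derivative (derivative (P i))) (fun i => derivative (derivative (P i))) (fun i => FR (Q i)) (fun i => FR (Q i)))/2 + (GS s (-1) 1 1 2 P P (fun i => derivative (derivative (FR (Q i)))) (fun i => derivative (derivative (FR (Q i)))))/2 :=
    GS_amgm s (by norm_num : (-1:ℝ) ≤ 1) (by norm_num : (1:ℝ) ≤ 2) _ _ _ _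
  have am31 : GS s 1 2 (-2) (-1) (fun i => derivative (derivative (FR (P i)))) (fun i => FR (P i)) (fun i => FL (Q i)) (fun i => derivative (derivative (FL (Q i)))) ≤ (GS s 1 2 (-2) (-1) (fun i => derivative (derivative (FR (P i)))) (fun i => derivative (derivative (FR (P i)))) (fun i => FL (Q i)) (fun i => FL (Q i)))/2 + (GS s 1 2 (-2) (-1) (fun i => FR (P i)) (fun i => FR (P i)) (fun i => derivative (derivative (FL (Q i)))) (fun i => derivative (derivative (FL (Q i)))))/2 :=
    GS_amgm s (by norm_num : (1:ℝ) ≤ 2) (by norm_num : (-2:ℝ) ≤ -1) _ _ _ _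
  have am32 : GS s 1 2 (-1) 1 (fun i => derivative (derivative (FR (P i)))) (fun i => FR (P i)) Q (fun i => derivative (derivative (Q i))) ≤ (GS s 1 2 (-1) 1 (fun i => derivative (derivative (FR (P i)))) (fun i => derivative (derivative (FR (P i)))) Q Q)/2 + (GS s 1 2 (-1) 1 (fun i => FR (P i)) (fun i => FR (P i)) (fun i => derivative (derivative (Q i))) (fun i => derivative (derivative (Q i))))/2 :=
    GS_amgm s (by norm_num : (1:ℝ) ≤ 2) (by norm_num : (-1:ℝ) ≤ 1) _ _ _ _
  have am33 : GS s 1 2 1 2 (fun i => derivative (derivative (FR (P i)))) (fun i => FR (P i)) (fun i => FR (Q i)) (fun i => derivative (derivative (FR (Q i)))) ≤ (GS s 1 2 1 2 (fun i => derivative (derivative (FR (P i)))) (fun i => derivative (derivative (FR (P i)))) (fun i => FR (Q i)) (fun i => FR (Q i)))/2 + (GS s 1 2 1 2 (fun i => FR (P i)) (fun i => FR (P i)) (fun i => derivative (derivative (FR (Q i)))) (fun i => derivative (derivative (FR (Q i)))))/2 :=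
    GS_amgm s (by norm_num : (1:ℝ) ≤ 2) (by norm_num : (1:ℝ) ≤ 2) _ _ _ _
  have rowD1 : (GS s (-2) (-1) (-2) (-1) (fun i => derivative (derivative (FL (P i)))) (fun i => derivative (derivative (FL (P i)))) (fun i => FL (Q i)) (fun i => FL (Q i))) + (GS s (-2) (-1) (-1) 1 (fun i => derivative (derivative (FL (P i)))) (fun i => derivative (derivative (FL (P i)))) Q Q) + (GS s (-2) (-1) 1 2 (fun i => derivative (derivative (FL (P i)))) (fun i => derivative (derivative (FL (P i)))) (fun i => FR (Q i)) (fun i => FR (Q i)))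
      ≤ 45 * GS s (-2) (-1) (-1) 1 (fun i => derivative (derivative (FL (P i)))) (fun i => derivative (derivative (FL (P i)))) Q Q :=
    GS_sum0 s (by norm_num : (-2:ℝ) ≤ -1) (fun i => derivative (derivative (FL (P i)))) Q
  have rowD2 : (GS s (-1) 1 (-2) (-1) (fun i => derivative (derivative (P i))) (fun i => derivative (derivative (P i))) (fun i => FL (Q i)) (fun i => FL (Q i))) + (GS s (-1) 1 (-1) 1 (fun i => derivative (derivative (P i))) (fun i => derivative (derivative (P i))) Q Q) + (GS s (-1) 1 1 2 (fun i => derivative (derivative (P i))) (fun i => derivative (derivative (P i))) (fun i => FR (Q i)) (fun i => FR (Q i)))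
      ≤ 45 * GS s (-1) 1 (-1) 1 (fun i => derivative (derivative (P i))) (fun i => derivative (derivative (P i))) Q Q :=
    GS_sum0 s (by norm_num : (-1:ℝ) ≤ 1) (fun i => derivative (derivative (P i))) Q
  have rowD3 : (GS s 1 2 (-2) (-1) (fun i => derivative (derivative (FR (P i)))) (fun i => derivative (derivative (FR (P i)))) (fun i => FL (Q i)) (fun i => FL (Q i))) + (GS s 1 2 (-1) 1 (fun i => derivative (derivative (FR (P i)))) (fun i => derivative (derivative (FR (P i)))) Q Q) + (GS s 1 2 1 2 (fun i => derivative (derivative (FR (P i)))) (fun i => derivative (derivative (FR (P i)))) (fun i => FR (Q i)) (fun i => FR (Q i)))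
      ≤ 45 * GS s 1 2 (-1) 1 (fun i => derivative (derivative (FR (P i)))) (fun i => derivative (derivative (FR (P i)))) Q Q :=
    GS_sum0 s (by norm_num : (1:ℝ) ≤ 2) (fun i => derivative (derivative (FR (P i)))) Q
  have flipD1 : GS s (-2) (-1) (-1) 1 (fun i => derivative (derivative (FL (P i)))) (fun i => derivative (derivative (FL (P i)))) Q Q
      = GS s (-1) 1 (-2) (-1) Q Q (fun i => derivative (derivative (FL (P i)))) (fun i => derivative (derivative (FL (P i)))) :=
    GS_flip s (-2) (-1) (-1) 1 (fun i => derivative (derivative (FL (P i)))) (fun i => derivative (derivative (FL (P i)))) Q Q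
  have flipD2 : GS s (-1) 1 (-1) 1 (fun i => derivative (derivative (P i))) (fun i => derivative (derivative (P i))) Q Q
      = GS s (-1) 1 (-1) 1 Q Q (fun i => derivative (derivative (P i))) (fun i => derivative (derivative (P i))) :=
    GS_flip s (-1) 1 (-1) 1 (fun i => derivative (derivative (P i))) (fun i => derivative (derivative (P i))) Q Q
  have flipD3 : GS s 1 2 (-1) 1 (fun i => derivative (derivative (FR (P i)))) (fun i => derivative (derivative (FR (P i)))) Q Q
      = GS s (-1) 1 1 2 Q Q (fun i => derivative (derivative (FR (P i)))) (fun i => derivative (derivative (FR (P i)))) :=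
    GS_flip s 1 2 (-1) 1 (fun i => derivative (derivative (FR (P i)))) (fun i => derivative (derivative (FR (P i)))) Q Q
  have sumD := GS_sum2 s Q P
  have flipU : GS s (-1) 1 (-1) 1 Q Q P P = GS s (-1) 1 (-1) 1 P P Q Q :=
    GS_flip s (-1) 1 (-1) 1 Q Q P P
  have flipX : GS s (-1) 1 (-1) 1 Q Q (fun i => derivative (derivative (P i))) (fun i => derivative (derivative (P i)))
      = GS s (-1) 1 (-1) 1 (fun i => derivative (derivative (P i))) (fun i => derivative (derivative (P i))) Q Q :=
    GS_flip s (-1) 1 (-1) 1 Q Q (fun i => derivative (derivative (P i))) (fun i => derivative (derivative (P i)))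
  have flipC11 : GS s (-2) (-1) (-2) (-1) (fun i => FL (P i)) (fun i => FL (P i)) (fun i => derivative (derivative (FL (Q i)))) (fun i => derivative (derivative (FL (Q i)))) = GS s (-2) (-1) (-2) (-1) (fun i => derivative (derivative (FL (Q i)))) (fun i => derivative (derivative (FL (Q i)))) (fun i => FL (P i)) (fun i => FL (P i)) :=
    GS_flip s (-2) (-1) (-2) (-1) (fun i => FL (P i)) (fun i => FL (P i)) (fun i => derivative (derivative (FL (Q i)))) (fun i => derivative (derivative (FL (Q i))))
  have flipC12 : GS s (-2) (-1) (-1) 1 (fun i => FL (P i)) (fun i => FL (P i)) (fun i => derivative (derivative (Q i))) (fun i => derivative (derivative (Q i))) = GS s (-1) 1 (-2) (-1) (fun i => derivative (derivative (Q i))) (fun i => derivative (derivative (Q i))) (fun i => FL (P i)) (fun i => FL (P i)) :=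
    GS_flip s (-2) (-1) (-1) 1 (fun i => FL (P i)) (fun i => FL (P i)) (fun i => derivative (derivative (Q i))) (fun i => derivative (derivative (Q i)))
  have flipC13 : GS s (-2) (-1) 1 2 (fun i => FL (P i)) (fun i => FL (P i)) (fun i => derivative (derivative (FR (Q i)))) (fun i => derivative (derivative (FR (Q i)))) = GS s 1 2 (-2) (-1) (fun i => derivative (derivative (FR (Q i)))) (fun i => derivative (derivative (FR (Q i)))) (fun i => FL (P i)) (fun i => FL (P i)) :=
    GS_flip s (-2) (-1) 1 2 (fun i => FL (P i)) (fun i => FL (P i)) (fun i => derivative (derivative (FR (Q i)))) (fun i => derivative (derivative (FR (Q i))))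
  have flipC21 : GS s (-1) 1 (-2) (-1) P P (fun i => derivative (derivative (FL (Q i)))) (fun i => derivative (derivative (FL (Q i)))) = GS s (-2) (-1) (-1) 1 (fun i => derivative (derivative (FL (Q i)))) (fun i => derivative (derivative (FL (Q i)))) P P :=
    GS_flip s (-1) 1 (-2) (-1) P P (fun i => derivative (derivative (FL (Q i)))) (fun i => derivative (derivative (FL (Q i))))
  have flipC22 : GS s (-1) 1 (-1) 1 P P (fun i => derivative (derivative (Q i))) (fun i => derivative (derivative (Q i))) = GS s (-1) 1 (-1) 1 (fun i => derivative (derivative (Q i))) (fun i => derivative (derivative (Q i))) P P :=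
    GS_flip s (-1) 1 (-1) 1 P P (fun i => derivative (derivative (Q i))) (fun i => derivative (derivative (Q i)))
  have flipC23 : GS s (-1) 1 1 2 P P (fun i => derivative (derivative (FR (Q i)))) (fun i => derivative (derivative (FR (Q i)))) = GS s 1 2 (-1) 1 (fun i => derivative (derivative (FR (Q i)))) (fun i => derivative (derivative (FR (Q i)))) P P :=
    GS_flip s (-1) 1 1 2 P P (fun i => derivative (derivative (FR (Q i)))) (fun i => derivative (derivative (FR (Q i))))
  have flipC31 : GS s 1 2 (-2) (-1) (fun i => FR (P i)) (fun i => FR (P i)) (fun i => derivative (derivative (FL (Q i)))) (fun i => derivative (derivative (FL (Q i)))) = GS s (-2) (-1) 1 2 (fun i => derivative (derivative (FL (Q i)))) (fun i => derivative (derivative (FL (Q i)))) (fun i => FR (P i)) (fun i => FR (P i)) :=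
    GS_flip s 1 2 (-2) (-1) (fun i => FR (P i)) (fun i => FR (P i)) (fun i => derivative (derivative (FL (Q i)))) (fun i => derivative (derivative (FL (Q i))))
  have flipC32 : GS s 1 2 (-1) 1 (fun i => FR (P i)) (fun i => FR (P i)) (fun i => derivative (derivative (Q i))) (fun i => derivative (derivative (Q i))) = GS s (-1) 1 1 2 (fun i => derivative (derivative (Q i))) (fun i => derivative (derivative (Q i))) (fun i => FR (P i)) (fun i => FR (P i)) :=
    GS_flip s 1 2 (-1) 1 (fun i => FR (P i)) (fun i => FR (P i)) (fun i => derivative (derivative (Q i))) (fun i => derivative (derivative (Q i)))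
  have flipC33 : GS s 1 2 1 2 (fun i => FR (P i)) (fun i => FR (P i)) (fun i => derivative (derivative (FR (Q i)))) (fun i => derivative (derivative (FR (Q i)))) = GS s 1 2 1 2 (fun i => derivative (derivative (FR (Q i)))) (fun i => derivative (derivative (FR (Q i)))) (fun i => FR (P i)) (fun i => FR (P i)) :=
    GS_flip s 1 2 1 2 (fun i => FR (P i)) (fun i => FR (P i)) (fun i => derivative (derivative (FR (Q i)))) (fun i => derivative (derivative (FR (Q i))))
  have rowC1 : (GS s (-2) (-1) (-2) (-1) (fun i => derivative (derivative (FL (Q i)))) (fun i => derivative (derivative (FL (Q i)))) (fun i => FL (P i)) (fun i => FL (P i))) + (GS s (-2) (-1) (-1) 1 (fun i => derivative (derivative (FL (Q i)))) (fun i => derivative (derivative (FL (Q i)))) P P) + (GS s (-2) (-1) 1 2 (fun i => derivative (derivative (FL (Q i)))) (fun i => derivative (derivative (FL (Q i)))) (fun i => FR (P i)) (fun i => FR (P i)))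
      ≤ 45 * GS s (-2) (-1) (-1) 1 (fun i => derivative (derivative (FL (Q i)))) (fun i => derivative (derivative (FL (Q i)))) P P :=
    GS_sum0 s (by norm_num : (-2:ℝ) ≤ -1) (fun i => derivative (derivative (FL (Q i)))) P
  have rowC2 : (GS s (-1) 1 (-2) (-1) (fun i => derivative (derivative (Q i))) (fun i => derivative (derivative (Q i))) (fun i => FL (P i)) (fun i => FL (P i))) + (GS s (-1) 1 (-1) 1 (fun i => derivative (derivative (Q i))) (fun i => derivative (derivative (Q i))) P P) + (GS s (-1) 1 1 2 (fun i => derivative (derivative (Q i))) (fun i => derivative (derivative (Q i))) (fun i => FR (P i)) (fun i => FR (P i)))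
      ≤ 45 * GS s (-1) 1 (-1) 1 (fun i => derivative (derivative (Q i))) (fun i => derivative (derivative (Q i))) P P :=
    GS_sum0 s (by norm_num : (-1:ℝ) ≤ 1) (fun i => derivative (derivative (Q i))) P
  have rowC3 : (GS s 1 2 (-2) (-1) (fun i => derivative (derivative (FR (Q i)))) (fun i => derivative (derivative (FR (Q i)))) (fun i => FL (P i)) (fun i => FL (P i))) + (GS s 1 2 (-1) 1 (fun i => derivative (derivative (FR (Q i)))) (fun i => derivative (derivative (FR (Q i)))) P P) + (GS s 1 2 1 2 (fun i => derivative (derivative (FR (Q i)))) (fun i => derivative (derivative (FR (Q i)))) (fun i => FR (P i)) (fun i => FR (P i)))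
      ≤ 45 * GS s 1 2 (-1) 1 (fun i => derivative (derivative (FR (Q i)))) (fun i => derivative (derivative (FR (Q i)))) P P :=
    GS_sum0 s (by norm_num : (1:ℝ) ≤ 2) (fun i => derivative (derivative (FR (Q i)))) P
  have flipEC1 : GS s (-2) (-1) (-1) 1 (fun i => derivative (derivative (FL (Q i)))) (fun i => derivative (derivative (FL (Q i)))) P P
      = GS s (-1) 1 (-2) (-1) P P (fun i => derivative (derivative (FL (Q i)))) (fun i => derivative (derivative (FL (Q i)))) :=
    GS_flip s (-2) (-1) (-1) 1 (fun i => derivative (derivative (FL (Q i)))) (fun i => derivative (derivative (FL (Q i)))) P P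
  have flipEC2 : GS s (-1) 1 (-1) 1 (fun i => derivative (derivative (Q i))) (fun i => derivative (derivative (Q i))) P P
      = GS s (-1) 1 (-1) 1 P P (fun i => derivative (derivative (Q i))) (fun i => derivative (derivative (Q i))) :=
    GS_flip s (-1) 1 (-1) 1 (fun i => derivative (derivative (Q i))) (fun i => derivative (derivative (Q i))) P P
  have flipEC3 : GS s 1 2 (-1) 1 (fun i => derivative (derivative (FR (Q i)))) (fun i => derivative (derivative (FR (Q i)))) P P
      = GS s (-1) 1 1 2 P P (fun i => derivative (derivative (FR (Q i)))) (fun i => derivative (derivative (FR (Q i)))) :=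
    GS_flip s 1 2 (-1) 1 (fun i => derivative (derivative (FR (Q i)))) (fun i => derivative (derivative (FR (Q i)))) P P
  have sumC := GS_sum2 s P Q
  have nX : 0 ≤ GS s (-1) 1 (-1) 1 (fun i => derivative (derivative (P i))) (fun i => derivative (derivative (P i))) Q Q :=
    GS_nonneg s (by norm_num) (by norm_num) _ _
  have nY : 0 ≤ GS s (-1) 1 (-1) 1 P P (fun i => derivative (derivative (Q i))) (fun i => derivative (derivative (Q i))) :=
    GS_nonneg s (by norm_num) (by norm_num) _ _
  have nU : 0 ≤ GS s (-1) 1 (-1) 1 P P Q Q :=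
    GS_nonneg s (by norm_num) (by norm_num) _ _
  linarith

end core

section fubini

lemma sqInt (s : Finset ℕ) (A A' : ℕ → ℝ[X]) :
    (∫ p in Sq, (∑ i ∈ s, (A i).eval p.1 * (A' i).eval p.2)^2)
      = GS s (-1) 1 (-1) 1 A A A' A' := by
  have hcont : Continuous fun p : ℝ × ℝ => (∑ i ∈ s, (A i).eval p.1 * (A' i).eval p.2)^2 :=
    (continuous_finset_sum _ fun i _ =>
      ((A i).continuous_aeval.comp continuous_fst).mul
        ((A' i).continuous_aeval.comp continuous_snd)).pow 2
  have hK : IsCompact (Set.Icc (-1:ℝ) 1 ×ˢ Set.Icc (-1:ℝ) 1) :=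
    isCompact_Icc.prod isCompact_Icc
  have hint : IntegrableOn
      (fun p : ℝ × ℝ => (∑ i ∈ s, (A i).eval p.1 * (A' i).eval p.2)^2) Sq volume := by
    apply (hcont.continuousOn.integrableOn_compact hK).mono_set
    simp only [Sq]
    exact Set.prod_mono Set.Ioo_subset_Icc_self Set.Ioo_subset_Icc_self
  simp only [Sq] at hint ⊢
  rw [MeasureTheory.Measure.volume_eq_prod] at hint ⊢
  rw [MeasureTheory.setIntegral_prod _ hint]
  have hin : ∀ x : ℝ,
      (∫ y in Set.Ioo (-1:ℝ) 1, (∑ i ∈ s, (A i).eval x * (A' i).eval y)^2)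
      = ii (-1) 1 (slc s (fun i => (A i).eval x) A')
          (slc s (fun i => (A i).eval x) A') := by
    intro x
    rw [← MeasureTheory.integral_Ioc_eq_integral_Ioo,
      ← intervalIntegral.integral_of_le (by norm_num : (-1:ℝ) ≤ 1)]
    unfold ii
    apply intervalIntegral.integral_congr
    intro y _
    simp only [eval_slice]
    ring
  calc (∫ x in Set.Ioo (-1:ℝ) 1,
        ∫ y in Set.Ioo (-1:ℝ) 1, (∑ i ∈ s, (A i).eval x * (A' i).eval y)^2)
      = ∫ x in Set.Ioo (-1:ℝ) 1,
          ii (-1) 1 (slc s (fun i => (A i).eval x) A')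
            (slc s (fun i => (A i).eval x) A') :=
        MeasureTheory.setIntegral_congr_fun measurableSet_Ioo (fun x _ => hin x)
    _ = ∫ x in (-1:ℝ)..1,
          ii (-1) 1 (slc s (fun i => (A i).eval x) A')
            (slc s (fun i => (A i).eval x) A') := by
        rw [← MeasureTheory.integral_Ioc_eq_integral_Ioo,
          ← intervalIntegral.integral_of_le (by norm_num : (-1:ℝ) ≤ 1)]
    _ = GS s (-1) 1 (-1) 1 A A A' A' := (GS_eq s (-1) 1 (-1) 1 A A A' A').symm

end fubini

theorem stmt_12 :
    ∃ K > (0 : ℝ), ∀ (W : ℕ) (a : ℕ → ℕ → ℝ),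
      ∫ p in Sq, (pder 1 1 (polyFun W a) p) ^ 2 ≤
        (K / 2) * ∫ p in Sq, ((pder 2 0 (polyFun W a) p) ^ 2 + (pder 0 2 (polyFun W a) p) ^ 2 +
          (polyFun W a p) ^ 2) := by
  refine ⟨45000000, by norm_num, fun W a => ?_⟩
  set s : Finset ℕ := Finset.range (W+1) with hs
  -- identify the four integrands
  have e11 : (fun p : ℝ × ℝ => (pder 1 1 (polyFun W a) p)^2)
      = fun p : ℝ × ℝ => (∑ i ∈ s, (derivative (pp i)).eval p.1
          * (derivative (qq W a i)).eval p.2)^2 := by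
    funext p
    rw [show p = (p.1, p.2) from rfl, pder11_eq]
  have e20 : (fun p : ℝ × ℝ => (pder 2 0 (polyFun W a) p)^2)
      = fun p : ℝ × ℝ => (∑ i ∈ s, (derivative (derivative (pp i))).eval p.1
          * (qq W a i).eval p.2)^2 := by
    funext p
    rw [show p = (p.1, p.2) from rfl, pder20_eq]
  have e02 : (fun p : ℝ × ℝ => (pder 0 2 (polyFun W a) p)^2)
      = fun p : ℝ × ℝ => (∑ i ∈ s, (pp i).eval p.1
          * (derivative (derivative (qq W a i))).eval p.2)^2 := by
    funext p
    rw [show p = (p.1, p.2) from rfl, pder02_eq]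
  have e00 : (fun p : ℝ × ℝ => (polyFun W a p)^2)
      = fun p : ℝ × ℝ => (∑ i ∈ s, (pp i).eval p.1 * (qq W a i).eval p.2)^2 := by
    funext p
    rw [show p = (p.1, p.2) from rfl, polyFun_eq]
  -- integrability of the three RHS pieces
  have hcont : ∀ (A A' : ℕ → ℝ[X]), Continuous
      fun p : ℝ × ℝ => (∑ i ∈ s, (A i).eval p.1 * (A' i).eval p.2)^2 := fun A A' =>
    (continuous_finset_sum _ fun i _ =>
      ((A i).continuous_aeval.comp continuous_fst).mul
        ((A' i).continuous_aeval.comp continuous_snd)).pow 2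
  have hint : ∀ (A A' : ℕ → ℝ[X]), IntegrableOn
      (fun p : ℝ × ℝ => (∑ i ∈ s, (A i).eval p.1 * (A' i).eval p.2)^2) Sq volume := by
    intro A A'
    apply (((hcont A A').continuousOn).integrableOn_compact
      (isCompact_Icc.prod isCompact_Icc)).mono_set
    simp only [Sq]
    exact Set.prod_mono Set.Ioo_subset_Icc_self Set.Ioo_subset_Icc_self
  -- split the RHS integral
  have hsplit : (∫ p in Sq, ((pder 2 0 (polyFun W a) p) ^ 2
        + (pder 0 2 (polyFun W a) p) ^ 2 + (polyFun W a p) ^ 2))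
      = (∫ p in Sq, (pder 2 0 (polyFun W a) p) ^ 2)
        + (∫ p in Sq, (pder 0 2 (polyFun W a) p) ^ 2)
        + ∫ p in Sq, (polyFun W a p) ^ 2 := by
    have i20 : IntegrableOn (fun p : ℝ × ℝ => (pder 2 0 (polyFun W a) p)^2) Sq volume := by
      rw [e20]; exact hint _ _
    have i02 : IntegrableOn (fun p : ℝ × ℝ => (pder 0 2 (polyFun W a) p)^2) Sq volume := by
      rw [e02]; exact hint _ _
    have i00 : IntegrableOn (fun p : ℝ × ℝ => (polyFun W a p)^2) Sq volume := by
      rw [e00]; exact hint _ _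
    have h2 := MeasureTheory.integral_add (μ := volume.restrict Sq) (i20.add i02) i00
    simp only [Pi.add_apply] at h2
    rw [MeasureTheory.integral_add i20 i02] at h2
    exact h2
  rw [hsplit, e11, e20, e02, e00, sqInt, sqInt, sqInt, sqInt]
  have hcore := core s pp (qq W a)
  have nX : 0 ≤ GS s (-1) 1 (-1) 1 (fun i => derivative (derivative (pp i)))
      (fun i => derivative (derivative (pp i))) (qq W a) (qq W a) :=
    GS_nonneg s (by norm_num) (by norm_num) _ _
  have nY : 0 ≤ GS s (-1) 1 (-1) 1 pp pp
      (fun i => derivative (derivative (qq W a i)))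
      (fun i => derivative (derivative (qq W a i))) :=
    GS_nonneg s (by norm_num) (by norm_num) _ _
  have nU : 0 ≤ GS s (-1) 1 (-1) 1 pp pp (qq W a) (qq W a) :=
    GS_nonneg s (by norm_num) (by norm_num) _ _
  linarith
end

section
/- (Diagonalization of the quadratic form C in a tensor-product basis.) Let W ∈ ℕ and let φ₀,…,φ_W : ℝ → ℝ be polynomials and μ₀,…,μ_W real numbers satisfying, for all 0 ≤ i, j ≤ W: ∫_{-1}^{1} φ_i(ξ) φ_j(ξ) dξ = δ_{ij} and ∫_{-1}^{1} (φ_i''''(ξ) φ_j''''(ξ) + φ_i'''(ξ) φ_j'''(ξ) + φ_i''(ξ) φ_j''(ξ) + φ_i'(ξ) φ_j'(ξ)) dξ = μ_i δ_{ij}. Define ψ_{i,j}(ξ,η) = φ_i(ξ) φ_j(η). Then for all 0 ≤ i, j, k, l ≤ W, the bilinear form C̃(ψ_{i,j}, ψ_{k,l}) = (μ_i + μ_j + 1) δ_{ik} δ_{jl}, where C̃(f,g) = ∫_S (∂⁴_ξ f · ∂⁴_ξ g + ∂⁴_η f · ∂⁴_η g + ∂³_ξ f · ∂³_ξ g + ∂³_η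 f · ∂³_η g + ∂²_ξ f · ∂²_ξ g + ∂²_η f · ∂²_η g + ∂_ξ f · ∂_ξ g + ∂_η f · ∂_η g + f·g) dξ dη. -/
open MeasureTheory

/-- The bilinear form
`C̃(f,g) = ∫_S (∂⁴_ξ f ∂⁴_ξ g + ∂⁴_η f ∂⁴_η g + ∂³_ξ f ∂³_ξ g + ∂³_η f ∂³_η g
  + ∂²_ξ f ∂²_ξ g + ∂²_η f ∂²_η g + ∂_ξ f ∂_ξ g + ∂_η f ∂_η g + f g) dξ dη`. -/
noncomputable def Ctilde (f g : ℝ × ℝ → ℝ) : ℝ :=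
  ∫ p in Sq, (pder 4 0 f p * pder 4 0 g p + pder 0 4 f p * pder 0 4 g p +
    pder 3 0 f p * pder 3 0 g p + pder 0 3 f p * pder 0 3 g p +
    pder 2 0 f p * pder 2 0 g p + pder 0 2 f p * pder 0 2 g p +
    pder 1 0 f p * pder 1 0 g p + pder 0 1 f p * pder 0 1 g p + f p * g p)

lemma polyIteratedDeriv (q : Polynomial ℝ) (n : ℕ) :
    iteratedDeriv n (fun x => q.eval x) = fun x => (Polynomial.derivative^[n] q).eval x := by
  induction n with
  | zero => simp
  | succ n ih =>
    rw [iteratedDeriv_succ, ih]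
    funext x
    rw [Polynomial.deriv, Function.iterate_succ_apply']

lemma pder_eval (a b : ℕ) (f g : Polynomial ℝ) (p : ℝ × ℝ) :
    pder a b (fun q => f.eval q.1 * g.eval q.2) p =
      (Polynomial.derivative^[a] f).eval p.1 * (Polynomial.derivative^[b] g).eval p.2 := by
  unfold pder
  have h1 : (fun ξ : ℝ => iteratedDeriv b
      (fun η => (fun q : ℝ × ℝ => f.eval q.1 * g.eval q.2) (ξ, η)) p.2)
      = fun ξ => (Polynomial.C ((Polynomial.derivative^[b] g).eval p.2) * f).eval ξ := by
    funext ξ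
    have h2 : (fun η => (fun q : ℝ × ℝ => f.eval q.1 * g.eval q.2) (ξ, η))
        = fun η => (Polynomial.C (f.eval ξ) * g).eval η := by
      funext η; simp
    rw [h2, polyIteratedDeriv]
    simp [Polynomial.iterate_derivative_C_mul]
    ring
  rw [h1, polyIteratedDeriv]
  simp [Polynomial.iterate_derivative_C_mul]
  ring

theorem stmt_14 (W : ℕ) (φ : ℕ → ℝ → ℝ) (μ : ℕ → ℝ)
    (hpoly : ∀ i ≤ W, ∃ q : Polynomial ℝ, ∀ x : ℝ, φ i x = q.eval x)
    (horth : ∀ i ≤ W, ∀ j ≤ W,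
      (∫ ξ in Set.Ioo (-1 : ℝ) 1, φ i ξ * φ j ξ) = if i = j then 1 else 0)
    (hE : ∀ i ≤ W, ∀ j ≤ W,
      (∫ ξ in Set.Ioo (-1 : ℝ) 1,
          (iteratedDeriv 4 (φ i) ξ * iteratedDeriv 4 (φ j) ξ +
            iteratedDeriv 3 (φ i) ξ * iteratedDeriv 3 (φ j) ξ +
            iteratedDeriv 2 (φ i) ξ * iteratedDeriv 2 (φ j) ξ +
            deriv (φ i) ξ * deriv (φ j) ξ)) = if i = j then μ i else 0) :
    ∀ i ≤ W, ∀ j ≤ W, ∀ k ≤ W, ∀ l ≤ W,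
      Ctilde (fun p => φ i p.1 * φ j p.2) (fun p => φ k p.1 * φ l p.2) =
        (μ i + μ j + 1) * (if i = k then 1 else 0) * (if j = l then 1 else 0) := by
  intro i hi j hj k hk l hl
  obtain ⟨qi, hqi⟩ := hpoly i hi
  obtain ⟨qj, hqj⟩ := hpoly j hj
  obtain ⟨qk, hqk⟩ := hpoly k hk
  obtain ⟨ql, hql⟩ := hpoly l hl
  have Hi : φ i = fun x => qi.eval x := funext hqi
  have Hj : φ j = fun x => qj.eval x := funext hqj
  have Hk : φ k = fun x => qk.eval x := funext hqk
  have Hl : φ l = fun x => ql.eval x := funext hql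
  have horth_ik := horth i hi k hk
  have horth_jl := horth j hj l hl
  have hE_ik := hE i hi k hk
  have hE_jl := hE j hj l hl
  rw [Hi, Hk] at horth_ik hE_ik
  rw [Hj, Hl] at horth_jl hE_jl
  set s : Set ℝ := Set.Ioo (-1 : ℝ) 1 with hs
  -- 1D integrability of polynomial evaluations
  have I1 : ∀ P : Polynomial ℝ, IntegrableOn (fun x => P.eval x) s := by
    intro P
    exact ((P.continuousOn.integrableOn_compact isCompact_Icc).mono_set
      Set.Ioo_subset_Icc_self)
  -- 2D integrability of products
  have I : ∀ P Q : Polynomial ℝ,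
      IntegrableOn (fun p : ℝ × ℝ => P.eval p.1 * Q.eval p.2) (s ×ˢ s) := by
    intro P Q
    have hc : Continuous (fun p : ℝ × ℝ => P.eval p.1 * Q.eval p.2) :=
      (P.continuous.comp continuous_fst).mul (Q.continuous.comp continuous_snd)
    exact ((hc.continuousOn.integrableOn_compact (isCompact_Icc.prod isCompact_Icc)).mono_set
      (Set.prod_mono Set.Ioo_subset_Icc_self Set.Ioo_subset_Icc_self))
  -- splitting product integrals
  have split : ∀ P Q : Polynomial ℝ,
      (∫ p in s ×ˢ s, P.eval p.1 * Q.eval p.2) =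
        (∫ x in s, P.eval x) * ∫ y in s, Q.eval y := by
    intro P Q
    rw [Measure.volume_eq_prod]
    exact setIntegral_prod_mul (fun x => P.eval x) (fun y => Q.eval y) s s
  set d : ℕ → Polynomial ℝ → Polynomial ℝ := fun n q => Polynomial.derivative^[n] q with hd
  -- rewrite the integrand
  simp only [Hi, Hj, Hk, Hl]
  unfold Ctilde
  have hSq : Sq = s ×ˢ s := rfl
  rw [hSq]
  set F : Fin 9 → (ℝ × ℝ) → ℝ := ![
    fun p => (d 4 qi * d 4 qk).eval p.1 * (qj * ql).eval p.2,
    fun p => (qi * qk).eval p.1 * (d 4 qj * d 4 ql).eval p.2,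
    fun p => (d 3 qi * d 3 qk).eval p.1 * (qj * ql).eval p.2,
    fun p => (qi * qk).eval p.1 * (d 3 qj * d 3 ql).eval p.2,
    fun p => (d 2 qi * d 2 qk).eval p.1 * (qj * ql).eval p.2,
    fun p => (qi * qk).eval p.1 * (d 2 qj * d 2 ql).eval p.2,
    fun p => (d 1 qi * d 1 qk).eval p.1 * (qj * ql).eval p.2,
    fun p => (qi * qk).eval p.1 * (d 1 qj * d 1 ql).eval p.2,
    fun p => (qi * qk).eval p.1 * (qj * ql).eval p.2] with hF
  have hint : (fun p : ℝ × ℝ =>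
      pder 4 0 (fun p => qi.eval p.1 * qj.eval p.2) p * pder 4 0 (fun p => qk.eval p.1 * ql.eval p.2) p +
      pder 0 4 (fun p => qi.eval p.1 * qj.eval p.2) p * pder 0 4 (fun p => qk.eval p.1 * ql.eval p.2) p +
      pder 3 0 (fun p => qi.eval p.1 * qj.eval p.2) p * pder 3 0 (fun p => qk.eval p.1 * ql.eval p.2) p +
      pder 0 3 (fun p => qi.eval p.1 * qj.eval p.2) p * pder 0 3 (fun p => qk.eval p.1 * ql.eval p.2) p +
      pder 2 0 (fun p => qi.eval p.1 * qj.eval p.2) p * pder 2 0 (fun p => qk.eval p.1 * ql.eval p.2) p +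
      pder 0 2 (fun p => qi.eval p.1 * qj.eval p.2) p * pder 0 2 (fun p => qk.eval p.1 * ql.eval p.2) p +
      pder 1 0 (fun p => qi.eval p.1 * qj.eval p.2) p * pder 1 0 (fun p => qk.eval p.1 * ql.eval p.2) p +
      pder 0 1 (fun p => qi.eval p.1 * qj.eval p.2) p * pder 0 1 (fun p => qk.eval p.1 * ql.eval p.2) p +
      (qi.eval p.1 * qj.eval p.2) * (qk.eval p.1 * ql.eval p.2))
      = fun p : ℝ × ℝ => ∑ m : Fin 9, F m p := by
    funext p
    simp only [hF, Fin.sum_univ_succ, Fin.sum_univ_zero, Matrix.cons_val_zero,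
      Matrix.cons_val_succ, add_zero]
    simp only [pder_eval, hd, Function.iterate_zero, id_eq, Polynomial.eval_mul]
    ring
  rw [hint]
  rw [MeasureTheory.integral_finset_sum Finset.univ (fun m _ => ?_)]
  swap
  · fin_cases m <;> exact I _ _
  simp only [hF, Fin.sum_univ_succ, Fin.sum_univ_zero, Matrix.cons_val_zero,
      Matrix.cons_val_succ, add_zero]
  -- split the sum of nine integrals
  simp only [split]
  -- translate the 1D hypotheses
  have O_ik : (∫ x in s, (qi * qk).eval x) = if i = k then (1:ℝ) else 0 := by
    rw [← horth_ik]; congr 1; funext x; simp [Polynomial.eval_mul]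
  have O_jl : (∫ x in s, (qj * ql).eval x) = if j = l then (1:ℝ) else 0 := by
    rw [← horth_jl]; congr 1; funext x; simp [Polynomial.eval_mul]
  have Esplit : ∀ a b c e : Polynomial ℝ,
      (∫ x in s, a.eval x) + (∫ x in s, b.eval x) +
        (∫ x in s, c.eval x) + (∫ x in s, e.eval x)
      = ∫ x in s, (a.eval x + b.eval x + c.eval x + e.eval x) := by
    intro a b c e
    have h2 : (∫ x in s, ∑ m : Fin 4, (![fun x => a.eval x, fun x => b.eval x,
        fun x => c.eval x, fun x => e.eval x] : Fin 4 → ℝ → ℝ) m x)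
        = ∑ m : Fin 4, ∫ x in s, (![fun x => a.eval x, fun x => b.eval x,
        fun x => c.eval x, fun x => e.eval x] : Fin 4 → ℝ → ℝ) m x :=
      MeasureTheory.integral_finset_sum Finset.univ (fun m _ => by
        fin_cases m <;> exact I1 _)
    simp only [Fin.sum_univ_succ, Fin.sum_univ_zero, Matrix.cons_val_zero,
      Matrix.cons_val_succ, add_zero] at h2
    have h3 : (∫ x in s, (a.eval x + b.eval x + c.eval x + e.eval x))
        = ∫ x in s, (a.eval x + (b.eval x + (c.eval x + e.eval x))) := by
      congr 1; funext x; ring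
    rw [h3, h2]
    ring
  have E_ik : (∫ x in s, (d 4 qi * d 4 qk).eval x) + (∫ x in s, (d 3 qi * d 3 qk).eval x) +
      (∫ x in s, (d 2 qi * d 2 qk).eval x) + (∫ x in s, (d 1 qi * d 1 qk).eval x)
      = if i = k then μ i else 0 := by
    rw [Esplit, ← hE_ik]
    congr 1; funext x
    simp [hd, polyIteratedDeriv, Polynomial.eval_mul, Polynomial.deriv]
  have E_jl : (∫ x in s, (d 4 qj * d 4 ql).eval x) + (∫ x in s, (d 3 qj * d 3 ql).eval x) +
      (∫ x in s, (d 2 qj * d 2 ql).eval x) + (∫ x in s, (d 1 qj * d 1 ql).eval x)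
      = if j = l then μ j else 0 := by
    rw [Esplit, ← hE_jl]
    congr 1; funext x
    simp [hd, polyIteratedDeriv, Polynomial.eval_mul, Polynomial.deriv]
  rw [O_ik, O_jl]
  have hA : (if i = k then μ i else 0) = μ i * (if i = k then (1:ℝ) else 0) := by
    split_ifs <;> ring
  have hB : (if j = l then μ j else 0) = μ j * (if j = l then (1:ℝ) else 0) := by
    split_ifs <;> ring
  rw [hA] at E_ik
  rw [hB] at E_jl
  linear_combination (if j = l then (1:ℝ) else 0) * E_ik + (if i = k then (1:ℝ) else 0) * E_jl
end
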